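/- arXiv:2012.04942 — 9 statements merged into one kernel-verified Lean document; each statement's English description precedes it below -/
import Mathlib

section
/- Let f ∈ Γ₀(X) and suppose x ∈ X is a (global) minimizer of f. Then for every M ≥ 0 one has ∂f(x) = ⋂_{ε>0} co‾( ∂_ε f(x) ∪ ε·∂_{ε+M} f(x) ) = ⋂_{ε>0} co‾( ∂_ε f(x) ∪ ε·∂_{ε+M} f⁺(x) ), where ε·S := {ε s : s ∈ S} and f⁺ := max{f, 0}. -/
open Set Pointwise Topology
open scoped Classical

noncomputable section

variable {X : Type*} [AddCommGroup X] [Module ℝ X] [TopologicalSpace X]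
  [IsTopologicalAddGroup X] [ContinuousSMul ℝ X] [LocallyConvexSpace ℝ X] [T2Space X]

/-- Convexity for extended-real-valued functions. -/
def EConvexOn' (f : X → EReal) : Prop :=
  ∀ x y : X, ∀ a b : ℝ, 0 ≤ a → 0 ≤ b → a + b = 1 →
    f (a • x + b • y) ≤ (a : EReal) * f x + (b : EReal) * f y

/-- `f ∈ Γ₀(X)`: proper, convex and lower semicontinuous. -/
def Gamma0 (f : X → EReal) : Prop :=
  (∀ x, f x ≠ ⊥) ∧ (∃ x, f x ≠ ⊤) ∧ EConvexOn' f ∧ LowerSemicontinuous f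

/-- Effective domain of `f`. -/
def edom (f : X → EReal) : Set X := {x | f x ≠ ⊤}

/-- The ε-subdifferential of `f` at `x` (a subset of the weak* dual);
it is empty when `ε < 0` or `f x ∉ ℝ`. -/
def esubdiff (f : X → EReal) (x : X) (ε : ℝ) : Set (WeakDual ℝ X) :=
  {p | 0 ≤ ε ∧ f x ≠ ⊤ ∧ f x ≠ ⊥ ∧
    ∀ y : X, f x + ((p y - p x - ε : ℝ) : EReal) ≤ f y}

/-- Normal cone to `A` at `x` (empty when `x ∉ A`). -/
def normalCone (A : Set X) (x : X) : Set (WeakDual ℝ X) :=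
  {p | x ∈ A ∧ ∀ y ∈ A, p y - p x ≤ 0}

/-- Recession cone of a set. -/
def recCone {V : Type*} [AddCommMonoid V] [Module ℝ V] (C : Set V) : Set V :=
  {y | ∃ c ∈ C, ∀ l : ℝ, 0 ≤ l → c + l • y ∈ C}

/-- Closed convex hull of a set. -/
def cclo {V : Type*} [AddCommMonoid V] [Module ℝ V] [TopologicalSpace V] (S : Set V) : Set V :=
  closure (convexHull ℝ S)

/-- `sMul l f` is the function `l·f`, with the convention `0·f = I_{dom f}`
(i.e. `(l·f) z = +∞` whenever `f z = +∞`). -/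
def sMul (l : ℝ) (f : X → EReal) : X → EReal :=
  fun z => if f z = ⊤ then ⊤ else (l : EReal) * f z

set_option linter.unusedSectionVars false

section myAux

variable {f : X → EReal} {x : X} {a : ℝ}

lemma esub_mem_iff (ha : f x = (a : EReal)) (hbot : ∀ y, f y ≠ ⊥) {ε : ℝ} (hε : 0 ≤ ε)
    (p : WeakDual ℝ X) :
    p ∈ esubdiff f x ε ↔ ∀ y : X, ∀ b : ℝ, f y = (b : EReal) → a + (p y - p x - ε) ≤ b := by
  constructor
  · rintro ⟨-, -, -, h⟩ y b hy
    have := h y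
    rw [ha, hy, ← EReal.coe_add, EReal.coe_le_coe_iff] at this
    linarith
  · intro h
    refine ⟨hε, by rw [ha]; exact EReal.coe_ne_top a, by rw [ha]; exact EReal.coe_ne_bot a,
      fun y => ?_⟩
    by_cases hy : f y = ⊤
    · rw [hy]; exact le_top
    · have hb : f y = ((f y).toReal : EReal) := (EReal.coe_toReal hy (hbot y)).symm
      rw [ha, hb, ← EReal.coe_add, EReal.coe_le_coe_iff]
      have := h y (f y).toReal hb
      linarith

lemma esub_closed (ha : f x = (a : EReal)) (hbot : ∀ y, f y ≠ ⊥) {ε : ℝ} (hε : 0 ≤ ε) :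
    IsClosed (esubdiff f x ε) := by
  have heq : esubdiff f x ε = ⋂ (y : X) (b : ℝ) (_ : f y = (b : EReal)),
      {p : WeakDual ℝ X | a + (p y - p x - ε) ≤ b} := by
    ext p
    simp only [mem_iInter, mem_setOf_eq]
    exact esub_mem_iff ha hbot hε p
  rw [heq]
  refine isClosed_iInter fun y => isClosed_iInter fun b => isClosed_iInter fun _ => ?_
  have hc : Continuous fun p : WeakDual ℝ X => a + (p y - p x - ε) := by
    have h1 := WeakDual.eval_continuous (𝕜 := ℝ) (E := X) y
    have h2 := WeakDual.eval_continuous (𝕜 := ℝ) (E := X) x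
    continuity
  exact isClosed_le hc continuous_const

lemma esub_convex (ha : f x = (a : EReal)) (hbot : ∀ y, f y ≠ ⊥) {ε : ℝ} (hε : 0 ≤ ε) :
    Convex ℝ (esubdiff f x ε) := by
  intro p hp q hq s t hs ht hst
  rw [esub_mem_iff ha hbot hε] at hp hq ⊢
  intro y b hy
  have h1 := hp y b hy
  have h2 := hq y b hy
  have e1 : (s • p + t • q) y = s * p y + t * q y := rfl
  have e2 : (s • p + t • q) x = s * p x + t * q x := rfl
  rw [e1, e2]
  have ht' : t = 1 - s := by linarith
  subst ht'
  nlinarith [mul_le_mul_of_nonneg_left h1 hs, mul_le_mul_of_nonneg_left h2 ht]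

lemma esub_mono (f : X → EReal) (x : X) {ε δ : ℝ} (h0 : 0 ≤ ε) (h : ε ≤ δ) :
    esubdiff f x ε ⊆ esubdiff f x δ := by
  rintro p ⟨-, ht, hb, hp⟩
  refine ⟨h0.trans h, ht, hb, fun y => le_trans (add_le_add_right ?_ _) (hp y)⟩
  exact EReal.coe_le_coe_iff.2 (by linarith)

lemma key_lemma (f : X → EReal) (hf : Gamma0 f) (x : X) (hmin : ∀ y, f x ≤ f y)
    (M : ℝ) (hM : 0 ≤ M) (g : X → EReal)
    (hg : ∀ ε : ℝ, 0 < ε → ε ≤ 1 → ∀ q ∈ esubdiff g x (ε + M),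
      ∀ y : X, ∀ b : ℝ, f y = (b : EReal) → q y - q x - (ε + M) ≤ b - (f x).toReal) :
    esubdiff f x 0 =
      ⋂ (ε : ℝ) (_ : 0 < ε), cclo (esubdiff f x ε ∪ ε • esubdiff g x (ε + M)) := by
  obtain ⟨hbot, ⟨z, hz⟩, -, -⟩ := hf
  have hftop : f x ≠ ⊤ := fun h => hz (top_le_iff.1 (h ▸ hmin z))
  have ha : f x = ((f x).toReal : EReal) := (EReal.coe_toReal hftop (hbot x)).symm
  set a := (f x).toReal
  apply Subset.antisymm
  · intro p hp
    refine mem_iInter₂.2 fun ε hε => ?_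
    exact subset_closure (subset_convexHull ℝ _ (Or.inl (esub_mono f x le_rfl hε.le hp)))
  · intro p hp
    rw [esub_mem_iff ha hbot le_rfl]
    intro y b hy
    have hstep : ∀ δ : ℝ, 0 < δ → a + (p y - p x - δ) ≤ b := by
      intro δ hδ
      have hMpos : (0:ℝ) < 1 + M := by linarith
      set ε : ℝ := min 1 (δ / (1 + M)) with hε'
      have hε0 : 0 < ε := lt_min one_pos (div_pos hδ hMpos)
      have hε1 : ε ≤ 1 := min_le_left _ _
      have hεδ' : ε ≤ δ := le_trans (min_le_right _ _) (div_le_self hδ.le (by linarith))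
      have hεδ : ε * (ε + M) ≤ δ := by
        have h1 : ε ≤ δ / (1 + M) := min_le_right _ _
        have h2 : ε + M ≤ 1 + M := by linarith
        calc ε * (ε + M) ≤ (δ / (1 + M)) * (1 + M) :=
              mul_le_mul h1 h2 (by linarith) (by positivity)
          _ = δ := div_mul_cancel₀ _ (ne_of_gt hMpos)
      have hsub : esubdiff f x ε ∪ ε • esubdiff g x (ε + M) ⊆ esubdiff f x δ := by
        rintro q (hq | hq)
        · exact esub_mono f x hε0.le hεδ' hq
        · obtain ⟨r, hr, rfl⟩ := hq
          rw [esub_mem_iff ha hbot hδ.le]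
          intro y' b' hy'
          have hab' : a ≤ b' := by
            have := hmin y'; rw [ha, hy', EReal.coe_le_coe_iff] at this; exact this
          have h1 := hg ε hε0 hε1 r hr y' b' hy'
          have e1 : (ε • r) y' = ε * r y' := rfl
          have e2 : (ε • r) x = ε * r x := rfl
          rw [e1, e2]
          nlinarith [mul_le_mul_of_nonneg_left h1 hε0.le,
            mul_le_mul_of_nonneg_right hε1 (sub_nonneg.2 hab')]
      have hcc : cclo (esubdiff f x ε ∪ ε • esubdiff g x (ε + M)) ⊆ esubdiff f x δ :=
        closure_minimal (convexHull_min hsub (esub_convex ha hbot hδ.le))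
          (esub_closed ha hbot hδ.le)
      have hpδ := hcc (mem_iInter₂.1 hp ε hε0)
      rw [esub_mem_iff ha hbot hδ.le] at hpδ
      exact hpδ y b hy
    by_contra hcon
    push_neg at hcon
    have := hstep ((a + (p y - p x - 0) - b) / 2) (by linarith)
    linarith

end myAux

/-- Lemma `lemvo`: if `f ∈ Γ₀(X)` and `x` is a global minimizer of `f`,
then for every `M ≥ 0`,
`∂f(x) = ⋂_{ε>0} co‾(∂_ε f(x) ∪ ε·∂_{ε+M} f(x)) = ⋂_{ε>0} co‾(∂_ε f(x) ∪ ε·∂_{ε+M} f⁺(x))`. -/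
theorem statement0 (f : X → EReal) (hf : Gamma0 f)
    (x : X) (hmin : ∀ y : X, f x ≤ f y) (M : ℝ) (hM : 0 ≤ M) :
    (esubdiff f x 0 =
      ⋂ (ε : ℝ) (_ : 0 < ε), cclo (esubdiff f x ε ∪ ε • esubdiff f x (ε + M))) ∧
    (esubdiff f x 0 =
      ⋂ (ε : ℝ) (_ : 0 < ε),
        cclo (esubdiff f x ε ∪ ε • esubdiff (fun z => max (f z) 0) x (ε + M))) := by
  obtain ⟨hbot, ⟨z, hz⟩, hconv, hlsc⟩ := hf
  have hf' : Gamma0 f := ⟨hbot, ⟨z, hz⟩, hconv, hlsc⟩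
  have hftop : f x ≠ ⊤ := fun h => hz (top_le_iff.1 (h ▸ hmin z))
  have ha : f x = ((f x).toReal : EReal) := (EReal.coe_toReal hftop (hbot x)).symm
  set a := (f x).toReal
  constructor
  · refine key_lemma f hf' x hmin M hM f ?_
    intro ε hε0 hε1 q hq y b hy
    rw [esub_mem_iff ha hbot (by linarith)] at hq
    have := hq y b hy
    linarith
  · refine key_lemma f hf' x hmin M hM (fun z => max (f z) 0) ?_
    intro ε hε0 hε1 q hq y b hy
    have hab : a ≤ b := by
      have := hmin y; rw [ha, hy, EReal.coe_le_coe_iff] at this; exact this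
    have hcoemax : ∀ c : ℝ, ((max c 0 : ℝ) : EReal) = max (c : EReal) 0 := by
      intro c
      rw [EReal.coe_strictMono.monotone.map_max, EReal.coe_zero]
    have hgx : (fun z => max (f z) 0) x = ((max a 0 : ℝ) : EReal) := by
      simp only [ha, hcoemax]
    have hgbot : ∀ y, (fun z => max (f z) 0) y ≠ ⊥ := by
      intro y' h
      simp only [max_eq_iff] at h
      rcases h with ⟨h1, -⟩ | ⟨h2, -⟩
      · exact hbot y' h1
      · exact absurd h2 (by norm_num)
    rw [esub_mem_iff (f := fun z => max (f z) 0) hgx hgbot (by linarith)] at hq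
    have hgy : (fun z => max (f z) 0) y = ((max b 0 : ℝ) : EReal) := by
      simp only [hy, hcoemax]
    have h1 := hq y (max b 0) hgy
    have h2 : max b 0 ≤ max a 0 + (b - a) :=
      max_le (by linarith [le_max_left a 0]) (by linarith [le_max_right a 0])
    linarith
end
end

section
/- Let A, A_1, …, A_k (k ≥ 2) be nonempty subsets of X. Then [ co‾( A ∪ (A_1 ∪ ⋯ ∪ A_k) ) ]_∞ = [ co‾( A ∪ (A_1 + ⋯ + A_k) ) ]_∞, where A_1 + ⋯ + A_k is the Minkowski sum. -/
open Set Pointwise Topology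
open scoped Classical

noncomputable section

variable {X : Type*} [AddCommGroup X] [Module ℝ X] [TopologicalSpace X]
  [IsTopologicalAddGroup X] [ContinuousSMul ℝ X] [LocallyConvexSpace ℝ X] [T2Space X]

set_option linter.unusedSectionVars false
set_option linter.unusedVariables false
set_option linter.deprecated false

/-- A bound on a functional over `E` extends to `cclo E`. -/
lemma aux_le_on_cclo (E : Set X) (p : X →L[ℝ] ℝ) (M : ℝ) (h : ∀ x ∈ E, p x ≤ M) :
    ∀ x ∈ cclo E, p x ≤ M := by
  have hconv : Convex ℝ {x : X | p x ≤ M} :=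
    convex_halfSpace_le ⟨fun a b => map_add p a b, fun c a => map_smul p c a⟩ M
  have hcl : IsClosed {x : X | p x ≤ M} := isClosed_le p.continuous continuous_const
  exact fun x hx => closure_minimal (convexHull_min h hconv) hcl hx

/-- Barrier-cone characterization of the recession cone of a closed convex hull. -/
lemma aux_recCone_cclo (E : Set X) (hE : E.Nonempty) :
    recCone (cclo E) = {y | ∀ p : X →L[ℝ] ℝ, BddAbove (p '' E) → p y ≤ 0} := by
  ext y
  constructor
  · rintro ⟨c, hc, hcl⟩ p ⟨M, hM⟩
    have hM' : ∀ x ∈ cclo E, p x ≤ M :=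
      aux_le_on_cclo E p M (fun x hx => hM ⟨x, hx, rfl⟩)
    by_contra hpy
    push_neg at hpy
    have hpc : p c ≤ M := hM' c hc
    set l : ℝ := (M - p c + 1) / p y with hl
    have hl0 : 0 ≤ l := div_nonneg (by linarith) hpy.le
    have := hM' _ (hcl l hl0)
    rw [map_add, map_smul] at this
    have hcan : l * p y = M - p c + 1 := div_mul_cancel₀ _ (ne_of_gt hpy)
    simp only [smul_eq_mul, hcan] at this
    linarith
  · intro hy
    obtain ⟨e, he⟩ := hE
    have heC : e ∈ cclo E := subset_closure (subset_convexHull ℝ E he)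
    refine ⟨e, heC, fun l hl => ?_⟩
    by_contra hx
    obtain ⟨f, u, hfu, hux⟩ := geometric_hahn_banach_closed_point
      (convex_convexHull ℝ E).closure isClosed_closure hx
    have hfE : BddAbove (f '' E) := by
      refine ⟨u, ?_⟩
      rintro _ ⟨x, hx', rfl⟩
      exact (hfu x (subset_closure (subset_convexHull ℝ E hx'))).le
    have hfy : f y ≤ 0 := hy f hfE
    have h1 : f (e + l • y) ≤ f e := by
      rw [map_add, map_smul, smul_eq_mul]
      nlinarith
    have h2 : f e < u := hfu e heC
    linarith
/-- Bddness of a Minkowski sum of two nonempty real sets. -/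
lemma aux_bddAbove_add_iff {s t : Set ℝ} (hs : s.Nonempty) (ht : t.Nonempty) :
    BddAbove (s + t) ↔ BddAbove s ∧ BddAbove t := by
  constructor
  · rintro ⟨M, hM⟩
    obtain ⟨a, ha⟩ := hs
    obtain ⟨b, hb⟩ := ht
    constructor
    · refine ⟨M - b, fun x hx => ?_⟩
      have := hM (Set.add_mem_add hx hb); linarith
    · refine ⟨M - a, fun x hx => ?_⟩
      have := hM (Set.add_mem_add ha hx); linarith
  · rintro ⟨h1, h2⟩
    exact h1.add h2

lemma aux_sum_nonempty {ι : Type*} (t : Finset ι) (s : ι → Set ℝ)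
    (hs : ∀ i ∈ t, (s i).Nonempty) : (∑ i ∈ t, s i).Nonempty := by
  induction t using Finset.cons_induction with
  | empty => exact ⟨0, rfl⟩
  | cons a t ha ih =>
      rw [Finset.sum_cons]
      exact (hs a (Finset.mem_cons_self a t)).add
        (ih fun i hi => hs i (Finset.mem_cons_of_mem hi))

lemma aux_bddAbove_finsetSum {ι : Type*} (t : Finset ι) (s : ι → Set ℝ)
    (hs : ∀ i ∈ t, (s i).Nonempty) :
    BddAbove (∑ i ∈ t, s i) ↔ ∀ i ∈ t, BddAbove (s i) := by
  induction t using Finset.cons_induction with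
  | empty =>
      simp only [Finset.sum_empty]
      exact iff_of_true ⟨0, fun x hx => le_of_eq (Set.mem_zero.1 hx)⟩ (by simp)
  | cons a t ha ih =>
      rw [Finset.sum_cons,
        aux_bddAbove_add_iff (hs a (Finset.mem_cons_self a t))
          (aux_sum_nonempty t s fun i hi => hs i (Finset.mem_cons_of_mem hi)),
        ih fun i hi => hs i (Finset.mem_cons_of_mem hi)]
      constructor
      · rintro ⟨h1, h2⟩ i hi
        rcases Finset.mem_cons.1 hi with rfl | hi
        · exact h1
        · exact h2 i hi
      · intro h
        exact ⟨h a (Finset.mem_cons_self a t),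
          fun i hi => h i (Finset.mem_cons_of_mem hi)⟩

lemma aux_image_finsetSum {ι : Type*} (t : Finset ι) (B : ι → Set X) (p : X →L[ℝ] ℝ) :
    p '' (∑ i ∈ t, B i) = ∑ i ∈ t, p '' B i := by
  induction t using Finset.cons_induction with
  | empty =>
      simp only [Finset.sum_empty]
      ext x
      simp [Set.mem_zero]
  | cons a t ha ih =>
      rw [Finset.sum_cons, Finset.sum_cons, Set.image_add, ih]

/-- Lemma `consum-1`: for nonempty sets `A, A_1, …, A_k` (`k ≥ 2`) in `X`,
`[co‾(A ∪ (A_1 ∪ ⋯ ∪ A_k))]_∞ = [co‾(A ∪ (A_1 + ⋯ + A_k))]_∞`. -/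
theorem statement1 (k : ℕ) (hk : 2 ≤ k) (A : Set X) (hA : A.Nonempty)
    (B : Fin k → Set X) (hB : ∀ i, (B i).Nonempty) :
    recCone (cclo (A ∪ ⋃ i, B i)) = recCone (cclo (A ∪ ∑ i, B i)) := by
  have hU : (A ∪ ⋃ i, B i).Nonempty := hA.inl
  have hS : (A ∪ ∑ i, B i).Nonempty := hA.inl
  rw [aux_recCone_cclo _ hU, aux_recCone_cclo _ hS]
  have key : ∀ p : X →L[ℝ] ℝ,
      BddAbove (p '' (A ∪ ⋃ i, B i)) ↔ BddAbove (p '' (A ∪ ∑ i, B i)) := by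
    intro p
    rw [image_union, image_union, bddAbove_union, bddAbove_union, image_iUnion,
      aux_image_finsetSum,
      aux_bddAbove_finsetSum _ _ (fun i _ => (hB i).image p),
      ← biUnion_univ, Set.Finite.bddAbove_biUnion finite_univ]
    simp
  ext y
  simp only [mem_setOf_eq]
  exact ⟨fun h p hp => h p ((key p).2 hp), fun h p hp => h p ((key p).1 hp)⟩
end
end

section
/- Let T₁ and T₂ be disjoint nonempty index sets and let {A_t : t ∈ T₁ ∪ T₂} be a family of nonempty subsets of X. Then for every m > 0: [ co‾( ⋃_{t∈T₁∪T₂} A_t ) ]_∞ = [ co‾( (⋃_{t∈T₁} A_t) ∪ (⋃_{t∈T₂} m·A_t) ) ]_∞ = [ co‾( ⋃_{t₁∈T₁, t₂∈T₂} (A_{t₁} + m·A_{t₂}) ) ]_∞, where m·A := {m a : a ∈ A} and + is the Minkowski sum. -/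
open Set Pointwise Topology
open scoped Classical

noncomputable section

variable {X : Type*} [AddCommGroup X] [Module ℝ X] [TopologicalSpace X]
  [IsTopologicalAddGroup X] [ContinuousSMul ℝ X] [LocallyConvexSpace ℝ X] [T2Space X]

lemma le_on_cclo {K : Set X} {p : X →L[ℝ] ℝ} {M : ℝ} (h : ∀ x ∈ K, p x ≤ M) :
    ∀ x ∈ cclo K, p x ≤ M := by
  have hconv : Convex ℝ {x : X | p x ≤ M} := convex_halfSpace_le ⟨p.map_add, p.map_smul⟩ M
  have hclosed : IsClosed {x : X | p x ≤ M} := isClosed_le p.continuous continuous_const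
  exact fun x hx => closure_minimal (convexHull_min h hconv) hclosed hx

lemma mem_recCone_cclo_iff {K : Set X} (hK : K.Nonempty) (y : X) :
    y ∈ recCone (cclo K) ↔ ∀ p : X →L[ℝ] ℝ, BddAbove (p '' K) → p y ≤ 0 := by
  constructor
  · rintro ⟨c, hc, h⟩ p ⟨M, hM⟩
    have hMK : ∀ x ∈ K, p x ≤ M := fun x hx => hM ⟨x, hx, rfl⟩
    have hall : ∀ l : ℝ, 0 ≤ l → p c + l * p y ≤ M := by
      intro l hl
      have := le_on_cclo hMK _ (h l hl)
      simpa [map_add, map_smul, smul_eq_mul] using this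
    by_contra hpy
    push_neg at hpy
    have hcM : p c ≤ M := by simpa using hall 0 le_rfl
    have h1 := hall ((M - p c + 1) / p y) (div_nonneg (by linarith) hpy.le)
    rw [div_mul_cancel₀ _ (ne_of_gt hpy)] at h1
    linarith
  · intro h
    obtain ⟨c0, hc0⟩ := hK
    have hc : c0 ∈ cclo K := subset_closure (subset_convexHull ℝ K hc0)
    refine ⟨c0, hc, fun l hl => ?_⟩
    by_contra hmem
    obtain ⟨f, u, hfs, hfu⟩ := geometric_hahn_banach_closed_point
      ((convex_convexHull ℝ K).closure) isClosed_closure hmem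
    have hbdd : BddAbove (f '' K) := ⟨u, by
      rintro _ ⟨x, hx, rfl⟩
      exact le_of_lt (hfs _ (subset_closure (subset_convexHull ℝ K hx)))⟩
    have hfy := h f hbdd
    have h1 : f c0 < u := hfs _ hc
    have h2 : f (c0 + l • y) = f c0 + l * f y := by simp [map_add, map_smul, smul_eq_mul]
    nlinarith [mul_nonpos_of_nonneg_of_nonpos hl hfy]

lemma recCone_cclo_eq {K1 K2 : Set X} (h1 : K1.Nonempty) (h2 : K2.Nonempty)
    (h : ∀ p : X →L[ℝ] ℝ, BddAbove (p '' K1) ↔ BddAbove (p '' K2)) :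
    recCone (cclo K1) = recCone (cclo K2) := by
  ext y
  rw [mem_recCone_cclo_iff h1, mem_recCone_cclo_iff h2]
  exact ⟨fun hy p hp => hy p ((h p).2 hp), fun hy p hp => hy p ((h p).1 hp)⟩

lemma bdd_image_smul {p : X →L[ℝ] ℝ} {S : Set X} {m : ℝ} (hm : 0 < m) :
    BddAbove (p '' (m • S)) ↔ BddAbove (p '' S) := by
  constructor
  · rintro ⟨M, hM⟩
    refine ⟨M / m, ?_⟩
    rintro _ ⟨x, hx, rfl⟩
    have h : p (m • x) ≤ M := hM ⟨m • x, smul_mem_smul_set hx, rfl⟩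
    rw [map_smul, smul_eq_mul] at h
    rw [le_div_iff₀ hm]
    linarith [mul_comm m (p x)]
  · rintro ⟨M, hM⟩
    refine ⟨m * M, ?_⟩
    rintro _ ⟨x, hx, rfl⟩
    obtain ⟨b, hb, rfl⟩ := hx
    rw [map_smul, smul_eq_mul]
    have h : p b ≤ M := hM ⟨b, hb, rfl⟩
    nlinarith

lemma bdd_image_add {p : X →L[ℝ] ℝ} {S T : Set X} (hS : S.Nonempty) (hT : T.Nonempty) :
    BddAbove (p '' (S + T)) ↔ BddAbove (p '' S) ∧ BddAbove (p '' T) := by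
  constructor
  · rintro ⟨M, hM⟩
    obtain ⟨s0, hs0⟩ := hS
    obtain ⟨t0, ht0⟩ := hT
    constructor
    · refine ⟨M - p t0, ?_⟩
      rintro _ ⟨x, hx, rfl⟩
      have h : p (x + t0) ≤ M := hM ⟨x + t0, add_mem_add hx ht0, rfl⟩
      rw [map_add] at h; linarith
    · refine ⟨M - p s0, ?_⟩
      rintro _ ⟨x, hx, rfl⟩
      have h : p (s0 + x) ≤ M := hM ⟨s0 + x, add_mem_add hs0 hx, rfl⟩
      rw [map_add] at h; linarith
  · rintro ⟨⟨M, hM⟩, ⟨N, hN⟩⟩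
    refine ⟨M + N, ?_⟩
    rintro _ ⟨x, hx, rfl⟩
    obtain ⟨a, ha, b, hb, rfl⟩ := hx
    rw [map_add]
    exact add_le_add (hM ⟨a, ha, rfl⟩) (hN ⟨b, hb, rfl⟩)


/-- Lemma `lemconsum0`: for a family of nonempty sets indexed by the disjoint
union of two nonempty index sets, and any `m > 0`, the three recession cones coincide. -/
theorem statement2 {I : Type*} (T1 T2 : Set I) (hdisj : Disjoint T1 T2)
    (hT1 : T1.Nonempty) (hT2 : T2.Nonempty)
    (A : I → Set X) (hA : ∀ t ∈ T1 ∪ T2, (A t).Nonempty)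
    (m : ℝ) (hm : 0 < m) :
    (recCone (cclo (⋃ t ∈ T1 ∪ T2, A t)) =
      recCone (cclo ((⋃ t ∈ T1, A t) ∪ ⋃ t ∈ T2, m • A t))) ∧
    (recCone (cclo (⋃ t ∈ T1 ∪ T2, A t)) =
      recCone (cclo (⋃ t1 ∈ T1, ⋃ t2 ∈ T2, (A t1 + m • A t2)))) := by
  set B1 : Set X := ⋃ t ∈ T1, A t with hB1def
  set B2 : Set X := ⋃ t ∈ T2, A t with hB2def
  obtain ⟨t1, ht1⟩ := hT1
  obtain ⟨t2, ht2⟩ := hT2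
  obtain ⟨a1, ha1⟩ := hA t1 (Or.inl ht1)
  obtain ⟨a2, ha2⟩ := hA t2 (Or.inr ht2)
  have hB1 : a1 ∈ B1 := mem_biUnion ht1 ha1
  have hB2 : a2 ∈ B2 := mem_biUnion ht2 ha2
  have e0 : (⋃ t ∈ T1 ∪ T2, A t) = B1 ∪ B2 := biUnion_union T1 T2 A
  have e1 : (⋃ t ∈ T2, m • A t) = m • B2 := (smul_set_iUnion₂ m _).symm
  have e2 : (⋃ t1 ∈ T1, ⋃ t2 ∈ T2, (A t1 + m • A t2)) = B1 + m • B2 := by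
    ext x
    simp only [mem_iUnion, Set.mem_add, hB1def, hB2def, mem_smul_set]
    constructor
    · rintro ⟨s1, hs1, s2, hs2, a, ha, b, ⟨c, hc, rfl⟩, rfl⟩
      exact ⟨a, ⟨s1, hs1, ha⟩, m • c, ⟨c, ⟨s2, hs2, hc⟩, rfl⟩, rfl⟩
    · rintro ⟨a, ⟨s1, hs1, ha⟩, b, ⟨c, ⟨s2, hs2, hc⟩, rfl⟩, rfl⟩
      exact ⟨s1, hs1, s2, hs2, a, ha, m • c, ⟨c, hc, rfl⟩, rfl⟩
  rw [e0, e1, e2]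
  have hmB2 : a2 ∈ B2 := hB2
  have hne0 : (B1 ∪ B2).Nonempty := ⟨a1, Or.inl hB1⟩
  have hne1 : (B1 ∪ m • B2).Nonempty := ⟨a1, Or.inl hB1⟩
  have hne2 : (B1 + m • B2).Nonempty := ⟨a1 + m • a2, add_mem_add hB1 (smul_mem_smul_set hB2)⟩
  have hmB2ne : (m • B2).Nonempty := ⟨m • a2, smul_mem_smul_set hB2⟩
  constructor
  · refine recCone_cclo_eq hne0 hne1 fun p => ?_
    rw [image_union, image_union, bddAbove_union, bddAbove_union, bdd_image_smul hm]
  · refine recCone_cclo_eq hne0 hne2 fun p => ?_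
    rw [image_union, bddAbove_union, bdd_image_add ⟨a1, hB1⟩ hmB2ne, bdd_image_smul hm]
end
end

section
/- Let f ∈ Γ₀(X) and x ∈ dom f. Then for every ε ≥ 0 one has ∂_ε f⁺(x) = ⋃_{0 ≤ λ ≤ 1} ∂_{ε + λ f(x) − f⁺(x)} (λf)(x), where f⁺ := max{f, 0}, (λf)(z) := λ f(z), and 0·f is the indicator function I_{dom f} (value 0 on dom f, +∞ outside). -/
open Set Pointwise Topology
open scoped Classical

noncomputable section

variable {X : Type*} [AddCommGroup X] [Module ℝ X] [TopologicalSpace X]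
  [IsTopologicalAddGroup X] [ContinuousSMul ℝ X] [LocallyConvexSpace ℝ X] [T2Space X]

private lemma ereal_coe_max (r s : ℝ) : ((max r s : ℝ) : EReal) = max (r : EReal) (s : EReal) :=
  EReal.coe_strictMono.monotone.map_max

/-- Lemma `hamu3l`: for `f ∈ Γ₀(X)`, `x ∈ dom f` and `ε ≥ 0`,
`∂_ε f⁺(x) = ⋃_{0 ≤ λ ≤ 1} ∂_{ε + λ f(x) − f⁺(x)} (λf)(x)`. -/
theorem statement3 (f : X → EReal) (hf : Gamma0 f) (x : X) (hx : x ∈ edom f)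
    (ε : ℝ) (hε : 0 ≤ ε) :
    esubdiff (fun z => max (f z) 0) x ε =
      ⋃ l ∈ Icc (0 : ℝ) 1,
        esubdiff (sMul l f) x (ε + l * (f x).toReal - max (f x).toReal 0) := by
  obtain ⟨hbot, -, hconv, -⟩ := hf
  have hx' : f x ≠ ⊤ := hx
  have coe_f : ∀ y : X, f y ≠ ⊤ → f y = (((f y).toReal : ℝ) : EReal) :=
    fun y hy => (EReal.coe_toReal hy (hbot y)).symm
  set a : ℝ := (f x).toReal with ha
  set m : ℝ := max a 0 with hm
  have hgx : max (f x) 0 = ((m : ℝ) : EReal) := by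
    rw [coe_f x hx', hm, ereal_coe_max]; rfl
  -- sMul values on the domain
  have hsmul : ∀ (l : ℝ) (y : X), f y ≠ ⊤ → sMul l f y = ((l * (f y).toReal : ℝ) : EReal) := by
    intro l y hy
    rw [sMul, if_neg hy, EReal.coe_mul, ← coe_f y hy]
  ext p
  simp only [mem_iUnion, mem_Icc, esubdiff, mem_setOf_eq]
  constructor
  · rintro ⟨-, -, -, hineq⟩
    set S : X → ℝ := fun y => m + (p y - p x) - ε with hS
    have key : ∀ y : X, f y ≠ ⊤ → S y ≤ max (f y).toReal 0 := by
      intro y hy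
      have h := hineq y
      rw [hgx, coe_f y hy, ereal_coe_max] at h
      have h2 : ((m + (p y - p x - ε) : ℝ) : EReal) ≤ ((max (f y).toReal 0 : ℝ) : EReal) := by
        rw [EReal.coe_add, ereal_coe_max]; exact_mod_cast h
      have := EReal.coe_le_coe_iff.mp h2
      simp only [hS]; linarith
    set T : Set ℝ := insert 0 {t | ∃ y, f y ≠ ⊤ ∧ 0 < (f y).toReal ∧ t = S y / (f y).toReal}
      with hT
    have hTne : T.Nonempty := ⟨0, mem_insert _ _⟩
    have hT1 : ∀ t ∈ T, t ≤ 1 := by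
      rintro t (rfl | ⟨y, hy, hry, rfl⟩)
      · exact zero_le_one
      · rw [div_le_one hry]
        have := key y hy
        rwa [max_eq_left hry.le] at this
    have hbdd : BddAbove T := ⟨1, hT1⟩
    set l : ℝ := sSup T with hl
    have hl0 : 0 ≤ l := le_csSup hbdd (mem_insert _ _)
    have hl1 : l ≤ 1 := csSup_le hTne hT1
    -- the cross inequality from convexity
    have cross : ∀ y₁ y₂ : X, f y₁ ≠ ⊤ → f y₂ ≠ ⊤ → 0 < (f y₁).toReal → (f y₂).toReal < 0 →
        S y₁ / (f y₁).toReal ≤ S y₂ / (f y₂).toReal := by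
      intro y₁ y₂ h₁ h₂ hr₁ hr₂
      set r₁ : ℝ := (f y₁).toReal
      set r₂ : ℝ := (f y₂).toReal
      have hd : r₂ - r₁ < 0 := by linarith
      have hd' : r₁ - r₂ > 0 := by linarith
      set t : ℝ := r₂ / (r₂ - r₁) with htdef
      set s : ℝ := r₁ / (r₁ - r₂) with hsdef
      have ht0 : 0 ≤ t := div_nonneg_of_nonpos hr₂.le hd.le
      have hs0 : 0 ≤ s := div_nonneg hr₁.le hd'.le
      have hne : r₂ - r₁ ≠ 0 := ne_of_lt hd
      have hne' : r₁ - r₂ ≠ 0 := ne_of_gt hd'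
      have hts : t + s = 1 := by
        rw [htdef, hsdef]; field_simp; ring
      have hz := hconv y₁ y₂ t s ht0 hs0 hts
      rw [coe_f y₁ h₁, coe_f y₂ h₂] at hz
      have hcomb : (t : EReal) * ((r₁ : ℝ) : EReal) + (s : EReal) * ((r₂ : ℝ) : EReal)
          = ((t * r₁ + s * r₂ : ℝ) : EReal) := by
        rw [EReal.coe_add, EReal.coe_mul, EReal.coe_mul]
      have hzero : t * r₁ + s * r₂ = 0 := by
        rw [htdef, hsdef]; field_simp; ring
      rw [hcomb, hzero] at hz
      have hztop : f (t • y₁ + s • y₂) ≠ ⊤ := by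
        intro hcon; rw [hcon] at hz
        exact EReal.coe_ne_top 0 (top_le_iff.mp hz)
      have hrz : (f (t • y₁ + s • y₂)).toReal ≤ 0 := by
        have := EReal.toReal_le_toReal hz (hbot _) (by simp)
        simpa using this
      have hSz := key _ hztop
      rw [max_eq_right hrz] at hSz
      have hSzval : S (t • y₁ + s • y₂) = t * S y₁ + s * S y₂ := by
        have hp : p (t • y₁ + s • y₂) = t * p y₁ + s * p y₂ := by
          rw [map_add, map_smul, map_smul]; rfl
        simp only [hS, hp]
        linear_combination (p x + ε - m) * hts
      rw [hSzval] at hSz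
      -- multiply out
      have hmul : (r₁ - r₂) * (t * S y₁ + s * S y₂) = -r₂ * S y₁ + r₁ * S y₂ := by
        rw [htdef, hsdef]; field_simp; ring
      have hfin : r₁ * S y₂ ≤ r₂ * S y₁ := by nlinarith
      rw [le_div_iff_of_neg hr₂, div_mul_eq_mul_div, le_div_iff₀ hr₁]
      nlinarith
    have claim : ∀ y : X, f y ≠ ⊤ → S y ≤ l * (f y).toReal := by
      intro y hy
      rcases lt_trichotomy ((f y).toReal) 0 with hry | hry | hry
      · have hub : ∀ t ∈ T, t ≤ S y / (f y).toReal := by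
          rintro t (rfl | ⟨y₁, hy₁, hr₁, rfl⟩)
          · have hSy : S y ≤ 0 := by
              have := key y hy; rwa [max_eq_right hry.le] at this
            exact div_nonneg_of_nonpos hSy hry.le
          · exact cross y₁ y hy₁ hy hr₁ hry
        have := csSup_le hTne hub
        rwa [le_div_iff_of_neg hry] at this
      · have hSy : S y ≤ 0 := by
          have := key y hy; rw [hry] at this; simpa using this
        rw [hry, mul_zero]; exact hSy
      · have hmem : S y / (f y).toReal ∈ T := Or.inr ⟨y, hy, hry, rfl⟩
        have := le_csSup hbdd hmem
        rw [div_le_iff₀ hry] at this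
        linarith [this]
    have hSx : S x = m - ε := by simp [hS]
    have hδ : 0 ≤ ε + l * a - m := by
      have := claim x hx'
      rw [hSx] at this; linarith
    refine ⟨l, ⟨hl0, hl1⟩, hδ, ?_, ?_, ?_⟩
    · rw [hsmul l x hx']; exact EReal.coe_ne_top _
    · rw [hsmul l x hx']; exact EReal.coe_ne_bot _
    · intro y
      by_cases hy : f y = ⊤
      · simp only [sMul]
        rw [if_pos hy]
        exact le_top
      · rw [hsmul l x hx', hsmul l y hy, ← EReal.coe_add, EReal.coe_le_coe_iff]
        have := claim y hy
        simp only [hS] at this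
        linarith
  · rintro ⟨l, ⟨hl0, hl1⟩, hδ, -, -, hineq⟩
    refine ⟨hε, by rw [hgx]; exact EReal.coe_ne_top _, by rw [hgx]; exact EReal.coe_ne_bot _, ?_⟩
    intro y
    by_cases hy : f y = ⊤
    · rw [hy]
      have : max (⊤ : EReal) 0 = ⊤ := max_eq_left le_top
      rw [this]; exact le_top
    · have h := hineq y
      rw [hsmul l x hx', hsmul l y hy, ← EReal.coe_add, EReal.coe_le_coe_iff] at h
      rw [hgx, coe_f y hy, ← EReal.coe_add, ← EReal.coe_zero, ← ereal_coe_max,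
        EReal.coe_le_coe_iff]
      set r : ℝ := (f y).toReal
      have hlr : l * r ≤ max r 0 := by
        rcases le_or_gt r 0 with h' | h'
        · exact le_trans (mul_nonpos_of_nonneg_of_nonpos hl0 h') (le_max_right _ _)
        · exact le_trans (by nlinarith) (le_max_left _ _)
      have : m + (p y - p x - ε) ≤ l * r := by linarith
      linarith
end
end

section
/- Let {f_t : t ∈ T} be a nonempty family of proper convex functions from X to ℝ∪{+∞} (not necessarily lower semicontinuous), let f := sup_{t∈T} f_t, and let x ∈ dom f. Under the standard hypothesis (SH) one has ℝ₊(dom f − x) = ⋂_{t∈T} ℝ₊(dom f_t − x), where ℝ₊ A := {λ a : λ ≥ 0, a ∈ A}. -/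
open Set Pointwise Topology
open scoped Classical

noncomputable section

variable {X : Type*} [AddCommGroup X] [Module ℝ X] [TopologicalSpace X]
  [IsTopologicalAddGroup X] [ContinuousSMul ℝ X] [LocallyConvexSpace ℝ X] [T2Space X]

/-- The cone `ℝ₊(A − x)`. -/
def coneGen (A : Set X) (x : X) : Set X :=
  {z | ∃ l : ℝ, 0 ≤ l ∧ ∃ a ∈ A, z = l • (a - x)}

/-- under (SH), for a nonempty family of proper convex functions
(not necessarily lsc) and `x ∈ dom f`, `ℝ₊(dom f − x) = ⋂_t ℝ₊(dom f_t − x)`. -/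
theorem statement5 {T : Type*} [TopologicalSpace T] [CompactSpace T] [T2Space T] [Nonempty T]
    (f : T → X → EReal)
    (hproper : ∀ t, (∀ z, f t z ≠ ⊥) ∧ (∃ z, f t z ≠ ⊤))
    (hconv : ∀ t, EConvexOn' (f t))
    (husc : ∀ z : X, UpperSemicontinuous fun t => f t z)
    (x : X) (hx : x ∈ edom (fun z => ⨆ t, f t z)) :
    coneGen (edom (fun z => ⨆ t, f t z)) x = ⋂ t, coneGen (edom (f t)) x := by
  have hxt : ∀ t, f t x ≠ ⊤ := by
    intro t h
    exact hx (top_le_iff.1 (h ▸ le_iSup (fun t => f t x) t))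
  apply Set.Subset.antisymm
  · intro z hz
    obtain ⟨l, hl, a, ha, rfl⟩ := hz
    refine Set.mem_iInter.2 fun t => ⟨l, hl, a, ?_, rfl⟩
    intro h
    exact ha (top_le_iff.1 (h ▸ le_iSup (fun t => f t a) t))
  · intro z hz
    rw [Set.mem_iInter] at hz
    by_cases hz0 : z = 0
    · exact ⟨0, le_refl 0, x, hx, by simp [hz0]⟩
    -- for each t, find s t > 0 and a real bound r t with f t (x + s t • z) < r t
    have key : ∀ t, ∃ s : ℝ, 0 < s ∧ ∃ r : ℝ, f t (x + s • z) < (r : EReal) := by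
      intro t
      obtain ⟨l, hl, a, ha, hza⟩ := hz t
      have hl0 : l ≠ 0 := by
        rintro rfl
        simp only [zero_smul] at hza
        exact hz0 hza
      have hlpos : 0 < l := lt_of_le_of_ne hl (Ne.symm hl0)
      refine ⟨l⁻¹, inv_pos.2 hlpos, ?_⟩
      have hpt : x + l⁻¹ • z = a := by
        rw [hza, smul_smul, inv_mul_cancel₀ hl0, one_smul]
        abel
      rw [hpt]
      obtain ⟨r, hr1, _⟩ := EReal.exists_between_coe_real (lt_top_iff_ne_top.2 ha)
      exact ⟨r, hr1⟩
    choose s hs r hr using key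
    obtain ⟨M, hM, _⟩ := EReal.exists_between_coe_real
      (lt_top_iff_ne_top.2 (hx : (⨆ t, f t x) ≠ ⊤))
    have hftxM : ∀ t, f t x ≤ (M : EReal) :=
      fun t => le_of_lt (lt_of_le_of_lt (le_iSup (fun t => f t x) t) hM)
    -- open cover
    set U : T → Set T := fun t => {t' | f t' (x + s t • z) < (r t : EReal)} with hU
    have hUopen : ∀ t, IsOpen (U t) := fun t => (husc (x + s t • z)).isOpen_preimage (r t)
    have hUcover : Set.univ ⊆ ⋃ t, U t := fun t _ => Set.mem_iUnion.2 ⟨t, hr t⟩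
    obtain ⟨I, hI⟩ := isCompact_univ.elim_finite_subcover U hUopen hUcover
    have hInem : I.Nonempty := by
      obtain ⟨t₀⟩ := ‹Nonempty T›
      obtain ⟨i, hi, _⟩ := Set.mem_iUnion₂.1 (hI (Set.mem_univ t₀))
      exact ⟨i, hi⟩
    set s₀ : ℝ := I.inf' hInem s with hs₀def
    have hs₀pos : 0 < s₀ := (Finset.lt_inf'_iff hInem).2 fun i _ => hs i
    set B : ℝ := I.sup' hInem (fun i => max (r i) M) with hBdef
    -- uniform bound
    have hbound : ∀ t, f t (x + s₀ • z) ≤ (B : EReal) := by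
      intro t
      obtain ⟨i, hiI, hti⟩ := Set.mem_iUnion₂.1 (hI (Set.mem_univ t))
      have hsi : 0 < s i := hs i
      have hsle : s₀ ≤ s i := Finset.inf'_le s hiI
      set a : ℝ := s₀ / s i with hadef
      have ha : 0 < a := div_pos hs₀pos hsi
      have ha1 : a ≤ 1 := (div_le_one hsi).2 hsle
      set b : ℝ := 1 - a with hbdef
      have hb : 0 ≤ b := by simp [hbdef]; linarith
      have hab : a + b = 1 := by ring
      have hasi : a * s i = s₀ := div_mul_cancel₀ s₀ hsi.ne'
      have hxx : a • x + b • x = x := by rw [← add_smul, hab, one_smul]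
      have hpoint : a • (x + s i • z) + b • x = x + s₀ • z := by
        calc a • (x + s i • z) + b • x = (a • x + b • x) + (a * s i) • z := by
              rw [smul_add, smul_smul]; abel
          _ = x + s₀ • z := by rw [hxx, hasi]
      have hcv := hconv t (x + s i • z) x a b ha.le hb hab
      rw [hpoint] at hcv
      have h1 : (a : EReal) * f t (x + s i • z) ≤ (a : EReal) * (r i : EReal) :=
        mul_le_mul_of_nonneg_left (le_of_lt hti) (by exact_mod_cast ha.le)
      have h2 : (b : EReal) * f t x ≤ (b : EReal) * (M : EReal) :=
        mul_le_mul_of_nonneg_left (hftxM t) (by exact_mod_cast hb)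
      have hreal : a * r i + b * M ≤ B := by
        have h3 : a * r i + b * M ≤ max (r i) M := by
          have e1 := mul_le_mul_of_nonneg_left (le_max_left (r i) M) ha.le
          have e2 := mul_le_mul_of_nonneg_left (le_max_right (r i) M) hb
          have e3 : a * (max (r i) M) + b * (max (r i) M) = max (r i) M := by
            rw [← add_mul, hab, one_mul]
          linarith
        exact le_trans h3 (Finset.le_sup' (fun i => max (r i) M) hiI)
      calc f t (x + s₀ • z) ≤ (a : EReal) * f t (x + s i • z) + (b : EReal) * f t x := hcv
        _ ≤ (a : EReal) * (r i : EReal) + (b : EReal) * (M : EReal) := add_le_add h1 h2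
        _ = ((a * r i + b * M : ℝ) : EReal) := by rw [EReal.coe_add, EReal.coe_mul, EReal.coe_mul]
        _ ≤ (B : EReal) := by exact_mod_cast hreal
    have hdom : (x + s₀ • z) ∈ edom (fun z => ⨆ t, f t z) := by
      have : (⨆ t, f t (x + s₀ • z)) ≤ (B : EReal) := iSup_le hbound
      exact (lt_of_le_of_lt this (EReal.coe_lt_top B)).ne
    refine ⟨s₀⁻¹, (inv_pos.2 hs₀pos).le, x + s₀ • z, hdom, ?_⟩
    rw [add_sub_cancel_left, smul_smul, inv_mul_cancel₀ hs₀pos.ne', one_smul]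
end
end

section
/- Let {f_t : t ∈ T} ⊂ Γ₀(X) be a nonempty family, f := sup_{t∈T} f_t, and x ∈ dom f. Let 0 < ε_t ≤ 1, t ∈ T, be such that inf_{t∈T} ε_t f_t(x) > −∞, and assume the standard hypothesis (SH) holds. Then for every ε > 0: N_{dom f}(x) = [ co‾( ⋃_{t∈T} ∂_ε(ε_t f_t)(x) ) ]_∞, where (ε_t f_t)(z) := ε_t f_t(z). -/
open Set Pointwise Topology
open scoped Classical

noncomputable section

variable {X : Type*} [AddCommGroup X] [Module ℝ X] [TopologicalSpace X]
  [IsTopologicalAddGroup X] [ContinuousSMul ℝ X] [LocallyConvexSpace ℝ X] [T2Space X]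

/-! ### Auxiliary material -/

instance : LocallyConvexSpace ℝ (WeakDual ℝ X) :=
  WeakBilin.locallyConvexSpace (B := topDualPairing ℝ X)

/-- Evaluation as a linear map on the weak dual. -/
def evW (y : X) : WeakDual ℝ X →ₗ[ℝ] ℝ := (topDualPairing ℝ X).flip y

lemma evW_apply (y : X) (q : WeakDual ℝ X) : evW y q = q y := rfl

/-- Inclusion of the continuous dual into the weak dual. -/
def toWD (q : X →L[ℝ] ℝ) : WeakDual ℝ X := q

lemma toWD_apply (q : X →L[ℝ] ℝ) (y : X) : toWD q y = q y := rfl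

lemma wd_add_smul_apply (c p : WeakDual ℝ X) (l : ℝ) (y : X) :
    (c + l • p) y = c y + l * p y := by
  have h := (evW y).map_add c (l • p)
  rw [map_smul] at h
  simpa [evW_apply, smul_eq_mul] using h

/-- Every continuous linear functional on the weak-* dual is an evaluation. -/
theorem weakDual_dual_eval (Φ : WeakDual ℝ X →L[ℝ] ℝ) :
    ∃ z : X, ∀ q : WeakDual ℝ X, Φ q = q z := by
  classical
  have hb : (𝓝 (0 : WeakDual ℝ X)).HasBasis
      ((topDualPairing ℝ X).toSeminormFamily.basisSets) _root_.id :=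
    LinearMap.hasBasis_weakBilin (topDualPairing ℝ X)
  have h0 : Φ ⁻¹' (Metric.ball (0 : ℝ) 1) ∈ 𝓝 (0 : WeakDual ℝ X) := by
    refine Φ.continuous.continuousAt.preimage_mem_nhds ?_
    rw [map_zero]
    exact Metric.ball_mem_nhds _ one_pos
  obtain ⟨U, hU, hUsub⟩ := hb.mem_iff.mp h0
  obtain ⟨s, r, hr, rfl⟩ := (SeminormFamily.basisSets_iff _).mp hU
  have hker : ⨅ i : s, LinearMap.ker (evW (i : X)) ≤
      LinearMap.ker (Φ : WeakDual ℝ X →ₗ[ℝ] ℝ) := by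
    intro q hq
    have hq' : ∀ i : s, q (i : X) = 0 := by
      intro i
      have := Submodule.mem_iInf _ |>.mp hq i
      simpa [evW_apply] using this
    have hball : ∀ c : ℝ, c • q ∈ (Seminorm.ball (s.sup (topDualPairing ℝ X).toSeminormFamily)
        (0 : WeakDual ℝ X) r) := by
      intro c
      refine (Seminorm.mem_ball_zero _).mpr ?_
      refine Seminorm.finset_sup_apply_lt hr ?_
      intro i hi
      show ‖(c • q) i‖ < r
      have h2 : (c • q) i = c * q i := by
        have := evW_apply i (c • q)
        rw [map_smul] at this
        simpa [evW_apply] using this.symm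
      rw [h2, hq' ⟨i, hi⟩]
      simpa using hr
    simp only [LinearMap.mem_ker]
    by_contra hne
    have hlt : ∀ c : ℝ, |c| * |Φ q| < 1 := by
      intro c
      have := hUsub (hball c)
      simp only [Set.mem_preimage, Metric.mem_ball, dist_zero_right] at this
      rw [map_smul] at this
      simpa [Real.norm_eq_abs, smul_eq_mul, abs_mul] using this
    have habs : 0 < |Φ q| := abs_pos.mpr hne
    have h2 := hlt (2 / |Φ q|)
    rw [abs_of_nonneg (by positivity : (0:ℝ) ≤ 2 / |Φ q|), div_mul_cancel₀ _ habs.ne'] at h2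
    norm_num at h2
  have hspan := mem_span_of_iInf_ker_le_ker (𝕜 := ℝ) (L := fun i : s => evW (i : X)) hker
  obtain ⟨c, hc⟩ := (Submodule.mem_span_range_iff_exists_fun ℝ).mp hspan
  refine ⟨∑ i : s, c i • (i : X), fun q => ?_⟩
  have := LinearMap.congr_fun hc q
  simp only [LinearMap.coe_sum, Finset.sum_apply, LinearMap.smul_apply,
    LinearMap.coe_coe, evW_apply, smul_eq_mul] at this
  have h3 : Φ q = ∑ x : s, c x * q (x : X) := this.symm
  rw [h3, map_sum]
  simp [smul_eq_mul]

/-- The fundamental Hahn–Banach lemma: if the affine minorant candidate values along a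
segment of the ray `x + [0,n]·z` stay strictly below `g`, then there is an
`ε`-subgradient of `g` at `x` whose value at `z` exceeds `γ - ε/n`. -/
theorem exists_esubdiff_gt (g : X → EReal) (hbot : ∀ y, g y ≠ ⊥) (hconv : EConvexOn' g)
    (hlsc : LowerSemicontinuous g) {x : X} (hxtop : g x ≠ ⊤)
    {ε : ℝ} (hε : 0 < ε) (z : X) (γ : ℝ) {n : ℝ} (hn : 0 < n)
    (hray : ∀ l : ℝ, l ∈ Set.Icc 0 n →
      (((g x).toReal - ε + γ * l : ℝ) : EReal) < g (x + l • z)) :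
    ∃ q : WeakDual ℝ X, q ∈ esubdiff g x ε ∧ γ - ε / n < q z := by
  classical
  set gx : ℝ := (g x).toReal with hgxdef
  have hgx : g x = (gx : EReal) := (EReal.coe_toReal hxtop (hbot x)).symm
  set epi : Set (X × ℝ) := {p | g p.1 ≤ (p.2 : EReal)} with hepidef
  have hepi_closed : IsClosed epi := by
    rw [← isOpen_compl_iff, isOpen_iff_mem_nhds]
    rintro ⟨y, s⟩ hp
    simp only [mem_compl_iff, hepidef, mem_setOf_eq, not_le] at hp
    obtain ⟨c, hsc, hcg⟩ := EReal.exists_between_coe_real hp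
    have h1 : ∀ᶠ y' in 𝓝 y, (c : EReal) < g y' := hlsc y c hcg
    have h2 : ∀ᶠ s' in 𝓝 s, s' < c := Iio_mem_nhds (by exact_mod_cast hsc)
    refine (h1.prod_nhds h2).mono ?_
    rintro ⟨y', s'⟩ ⟨hy', hs'⟩
    simp only [mem_compl_iff, hepidef, mem_setOf_eq, not_le]
    exact lt_trans (by exact_mod_cast hs') hy'
  have hepi_conv : Convex ℝ epi := by
    rintro ⟨y, s⟩ hys ⟨y', s'⟩ hys' a b ha hb hab
    simp only [hepidef, mem_setOf_eq] at hys hys'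
    have h1 : g (a • y + b • y') ≤ (a : EReal) * g y + (b : EReal) * g y' :=
      hconv y y' a b ha hb hab
    have h2 : (a : EReal) * g y + (b : EReal) * g y' ≤ ((a * s + b * s' : ℝ) : EReal) := by
      rw [EReal.coe_add, EReal.coe_mul, EReal.coe_mul]
      exact add_le_add (mul_le_mul_of_nonneg_left hys (by exact_mod_cast ha))
        (mul_le_mul_of_nonneg_left hys' (by exact_mod_cast hb))
    show g ((a • (y, s) + b • (y', s')).1) ≤ (((a • (y, s) + b • (y', s')).2 : ℝ) : EReal)
    simp only [Prod.smul_mk, Prod.mk_add_mk, smul_eq_mul]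
    exact le_trans h1 h2
  set φ : ℝ → X × ℝ := fun l => (x + l • z, gx - ε + γ * l) with hφdef
  have hφcont : Continuous φ := by
    refine Continuous.prodMk ?_ (by fun_prop)
    exact continuous_const.add (continuous_id.smul continuous_const)
  set S : Set (X × ℝ) := φ '' Icc 0 n with hSdef
  have hS_comp : IsCompact S := isCompact_Icc.image hφcont
  have hS_conv : Convex ℝ S := by
    rintro - ⟨l₁, hl₁, rfl⟩ - ⟨l₂, hl₂, rfl⟩ a b ha hb hab
    refine ⟨a * l₁ + b * l₂, by simpa using convex_Icc (0:ℝ) n hl₁ hl₂ ha hb hab, ?_⟩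
    obtain rfl : b = 1 - a := by linarith
    refine Prod.ext ?_ ?_
    · show x + (a * l₁ + (1 - a) * l₂) • z
        = (a • (x + l₁ • z, gx - ε + γ * l₁) + (1 - a) • (x + l₂ • z, gx - ε + γ * l₂)).1
      simp only [Prod.smul_mk, Prod.mk_add_mk]
      module
    · show gx - ε + γ * (a * l₁ + (1 - a) * l₂)
        = (a • (x + l₁ • z, gx - ε + γ * l₁) + (1 - a) • (x + l₂ • z, gx - ε + γ * l₂)).2
      simp only [Prod.smul_mk, Prod.mk_add_mk, smul_eq_mul]
      ring
  have hdisj : Disjoint S epi := by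
    rw [Set.disjoint_left]
    rintro - ⟨l, hl, rfl⟩ hmem
    simp only [hepidef, mem_setOf_eq] at hmem
    exact absurd hmem (not_le.mpr (hray l hl))
  obtain ⟨Φ, u, v, hSu, huv, hepiv⟩ :=
    geometric_hahn_banach_compact_closed hS_conv hS_comp hepi_conv hepi_closed hdisj
  set ψ : X →L[ℝ] ℝ := Φ.comp (ContinuousLinearMap.inl ℝ X ℝ) with hψdef
  set cc : ℝ := Φ (0, 1) with hccdef
  have hΦ : ∀ (y : X) (r : ℝ), Φ (y, r) = ψ y + r * cc := by
    intro y r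
    have h3 : (y, r) = ((y, (0:ℝ)) : X × ℝ) + r • (((0:X), (1:ℝ)) : X × ℝ) := by
      simp [Prod.smul_mk, Prod.mk_add_mk]
    rw [h3, map_add, map_smul]
    simp [hψdef, hccdef, smul_eq_mul]
  have hx_epi : ((x, gx) : X × ℝ) ∈ epi := by
    simp only [hepidef, mem_setOf_eq]
    exact le_of_eq hgx
  have hxv : v < ψ x + gx * cc := by
    have := hepiv _ hx_epi; rwa [hΦ] at this
  have h0S : φ 0 ∈ S := ⟨0, ⟨le_refl 0, hn.le⟩, rfl⟩
  have hx0 : ψ x + (gx - ε) * cc < u := by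
    have h4 := hSu _ h0S
    simp only [hφdef, zero_smul, add_zero, mul_zero] at h4
    rwa [hΦ] at h4
  have hcc : 0 < cc := by
    rcases lt_trichotomy cc 0 with hneg | h0 | hposs
    · exfalso
      set k : ℝ := max 0 ((v - ψ x) / cc - gx) with hkdef
      have hk0 : 0 ≤ k := le_max_left _ _
      have hmem : ((x, gx + k) : X × ℝ) ∈ epi := by
        simp only [hepidef, mem_setOf_eq, hgx]
        exact_mod_cast le_add_of_nonneg_right hk0
      have h1 := hepiv _ hmem
      rw [hΦ] at h1
      have h2 : (v - ψ x) / cc - gx ≤ k := le_max_right _ _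
      have h3 : (v - ψ x) / cc ≤ gx + k := by linarith
      have h4 : (gx + k) * cc ≤ v - ψ x := by rwa [div_le_iff_of_neg hneg] at h3
      linarith
    · exfalso
      rw [h0] at hxv hx0
      simp only [mul_zero, add_zero] at hxv hx0
      linarith
    · exact hposs
  have hmin : ∀ y : X, g y ≠ ⊤ → (v - ψ y) / cc < (g y).toReal := by
    intro y hy
    have hmem : ((y, (g y).toReal) : X × ℝ) ∈ epi := by
      simp only [hepidef, mem_setOf_eq]
      exact le_of_eq (EReal.coe_toReal hy (hbot y)).symm
    have h1 := hepiv _ hmem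
    rw [hΦ] at h1
    rw [div_lt_iff₀ hcc]
    linarith
  have hax : gx - ε < (v - ψ x) / cc := by
    rw [lt_div_iff₀ hcc]
    linarith
  set q0 : X →L[ℝ] ℝ := (-(cc)⁻¹) • ψ with hq0def
  have hq0 : ∀ y : X, toWD q0 y = -(ψ y / cc) := by
    intro y
    rw [toWD_apply, hq0def]
    simp [ContinuousLinearMap.smul_apply, smul_eq_mul, div_eq_mul_inv]
    ring
  refine ⟨toWD q0, ⟨hε.le, hxtop, hbot x, ?_⟩, ?_⟩
  · intro y
    by_cases hy : g y = ⊤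
    · rw [hy]; exact le_top
    · have hq : toWD q0 y - toWD q0 x - ε = ((v - ψ y) / cc - (v - ψ x) / cc) - ε := by
        rw [hq0 y, hq0 x]; ring
      have h5 := hmin y hy
      have h6 : gx + (toWD q0 y - toWD q0 x - ε) ≤ (g y).toReal := by
        rw [hq]; linarith
      calc g x + ((toWD q0 y - toWD q0 x - ε : ℝ) : EReal)
          = ((gx + (toWD q0 y - toWD q0 x - ε) : ℝ) : EReal) := by rw [hgx, ← EReal.coe_add]
        _ ≤ (((g y).toReal : ℝ) : EReal) := by exact_mod_cast h6
        _ = g y := EReal.coe_toReal hy (hbot y)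
  · have hnS : φ n ∈ S := ⟨n, ⟨hn.le, le_refl n⟩, rfl⟩
    have h6 := hSu _ hnS
    simp only [hφdef] at h6
    rw [hΦ] at h6
    have hψadd : ψ (x + n • z) = ψ x + n * ψ z := by
      rw [map_add, map_smul]; simp [smul_eq_mul]
    rw [hψadd] at h6
    have e1 : (gx - ε + γ * n) * cc = gx * cc + (γ * n - ε) * cc := by ring
    have key : n * ψ z + (γ * n - ε) * cc < 0 := by
      rw [e1] at h6; linarith
    have h8 : ψ z / cc < (ε - γ * n) / n := by
      rw [div_lt_div_iff₀ hcc hn]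
      have e2 : ψ z * n = n * ψ z := by ring
      have e3 : (ε - γ * n) * cc = -((γ * n - ε) * cc) := by ring
      rw [e2, e3]
      linarith
    have h9 : (ε - γ * n) / n = ε / n - γ := by
      field_simp
    rw [hq0 z]
    linarith

lemma mulpos_ne_bot {l : ℝ} (hl : 0 < l) {a : EReal} (ha : a ≠ ⊥) : (l : EReal) * a ≠ ⊥ := by
  induction a using EReal.rec with
  | bot => exact absurd rfl ha
  | coe r => rw [← EReal.coe_mul]; exact EReal.coe_ne_bot _
  | top => rw [EReal.coe_mul_top_of_pos hl]; simp

lemma mulpos_ne_top {l : ℝ} (hl : 0 < l) {a : EReal} (ha : a ≠ ⊤) : (l : EReal) * a ≠ ⊤ := by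
  induction a using EReal.rec with
  | bot => rw [EReal.coe_mul_bot_of_pos hl]; simp
  | coe r => rw [← EReal.coe_mul]; exact EReal.coe_ne_top _
  | top => exact absurd rfl ha

lemma coe_lt_mulpos_iff {l : ℝ} (hl : 0 < l) {a : EReal} (ha : a ≠ ⊥) (r : ℝ) :
    (r : EReal) < (l : EReal) * a ↔ ((r / l : ℝ) : EReal) < a := by
  induction a using EReal.rec with
  | bot => exact absurd rfl ha
  | coe s =>
    rw [← EReal.coe_mul, EReal.coe_lt_coe_iff, EReal.coe_lt_coe_iff, div_lt_iff₀ hl, mul_comm]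
  | top =>
    rw [EReal.coe_mul_top_of_pos hl]
    simp [EReal.coe_lt_top]

lemma econvex_smul {l : ℝ} (hl : 0 < l) {f : X → EReal} (hbot : ∀ y, f y ≠ ⊥)
    (hconv : EConvexOn' f) : EConvexOn' (fun z => (l : EReal) * f z) := by
  intro y y' a b ha hb hab
  show (l : EReal) * f (a • y + b • y') ≤
    (a : EReal) * ((l : EReal) * f y) + (b : EReal) * ((l : EReal) * f y')
  rcases eq_or_lt_of_le ha with h0 | ha'
  · obtain rfl : b = 1 := by linarith
    simp [← h0]
  rcases eq_or_lt_of_le hb with h0 | hb'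
  · obtain rfl : a = 1 := by linarith
    simp [← h0]
  by_cases hy : f y = ⊤
  · rw [hy, EReal.coe_mul_top_of_pos hl, EReal.coe_mul_top_of_pos ha',
      EReal.top_add_of_ne_bot]
    · exact le_top
    · exact mulpos_ne_bot hb' (mulpos_ne_bot hl (hbot y'))
  by_cases hy' : f y' = ⊤
  · rw [hy', EReal.coe_mul_top_of_pos hl, EReal.coe_mul_top_of_pos hb',
      EReal.add_top_of_ne_bot]
    · exact le_top
    · exact mulpos_ne_bot ha' (mulpos_ne_bot hl (hbot y))
  obtain ⟨ry, hry⟩ : ∃ r : ℝ, f y = (r : EReal) :=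
    ⟨(f y).toReal, (EReal.coe_toReal hy (hbot y)).symm⟩
  obtain ⟨ry', hry'⟩ : ∃ r : ℝ, f y' = (r : EReal) :=
    ⟨(f y').toReal, (EReal.coe_toReal hy' (hbot y')).symm⟩
  have h1 := hconv y y' a b ha hb hab
  rw [hry, hry', ← EReal.coe_mul, ← EReal.coe_mul, ← EReal.coe_add] at h1
  rw [hry, hry']
  calc (l : EReal) * f (a • y + b • y')
      ≤ (l : EReal) * ((a * ry + b * ry' : ℝ) : EReal) :=
        mul_le_mul_of_nonneg_left h1 (by exact_mod_cast hl.le)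
    _ = ((l * (a * ry + b * ry') : ℝ) : EReal) := (EReal.coe_mul _ _).symm
    _ = ((a * (l * ry) + b * (l * ry') : ℝ) : EReal) := by
        rw [show l * (a * ry + b * ry') = a * (l * ry) + b * (l * ry') from by ring]
    _ = (a : EReal) * ((l : EReal) * (ry : EReal)) + (b : EReal) * ((l : EReal) * (ry' : EReal)) := by
        push_cast
        rfl

lemma elsc_smul {l : ℝ} (hl : 0 < l) {f : X → EReal} (hbot : ∀ y, f y ≠ ⊥)
    (hlsc : LowerSemicontinuous f) : LowerSemicontinuous (fun z => (l : EReal) * f z) := by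
  intro w y hy
  rcases eq_or_ne y ⊥ with rfl | hyne
  · filter_upwards with z
    exact bot_lt_iff_ne_bot.mpr (mulpos_ne_bot hl (hbot z))
  · obtain ⟨r, hr1, hr2⟩ := EReal.exists_between_coe_real hy
    have h3 : ((r / l : ℝ) : EReal) < f w := (coe_lt_mulpos_iff hl (hbot w) r).mp hr2
    filter_upwards [hlsc w _ h3] with z hz
    exact hr1.trans ((coe_lt_mulpos_iff hl (hbot z) r).mpr hz)

/-- Theorem `p1`, equality under (SH): for `{f_t} ⊂ Γ₀(X)`, `f = sup_t f_t`,
`x ∈ dom f`, weights `0 < ε_t ≤ 1` with `inf_t ε_t f_t(x) > −∞`, and every `ε > 0`,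
`N_{dom f}(x) = [co‾(⋃_t ∂_ε(ε_t f_t)(x))]_∞`. -/
theorem statement7 {T : Type*} [TopologicalSpace T] [CompactSpace T] [T2Space T] [Nonempty T]
    (f : T → X → EReal) (hf : ∀ t, Gamma0 (f t))
    (husc : ∀ z : X, UpperSemicontinuous fun t => f t z)
    (x : X) (hx : x ∈ edom (fun z => ⨆ t, f t z))
    (et : T → ℝ) (het : ∀ t, 0 < et t ∧ et t ≤ 1)
    (hinf : (⊥ : EReal) < ⨅ t, sMul (et t) (f t) x)
    (ε : ℝ) (hε : 0 < ε) :
    normalCone (edom (fun z => ⨆ t, f t z)) x =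
      recCone (cclo (⋃ t, esubdiff (sMul (et t) (f t)) x ε)) := by
  classical
  obtain ⟨t₀⟩ := (inferInstance : Nonempty T)
  set F : X → EReal := fun z => ⨆ t, f t z with hFdef
  set g : T → X → EReal := fun t => sMul (et t) (f t) with hgdef
  have hFx : F x ≠ ⊤ := hx
  have hftx_top : ∀ t, f t x ≠ ⊤ := by
    intro t h
    exact hFx (top_le_iff.mp (h ▸ le_iSup (fun t => f t x) t))
  have hftx_bot : ∀ t, f t x ≠ ⊥ := fun t => (hf t).1 x
  have hgt_eq : ∀ t, g t = fun w => ((et t : ℝ) : EReal) * f t w := by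
    intro t; funext w
    show (if f t w = ⊤ then ⊤ else (et t : EReal) * f t w) = _
    split_ifs with h
    · rw [h, EReal.coe_mul_top_of_pos (het t).1]
    · rfl
  have hg_bot : ∀ t w, g t w ≠ ⊥ := by
    intro t w; rw [hgt_eq t]; exact mulpos_ne_bot (het t).1 ((hf t).1 w)
  have hg_x_top : ∀ t, g t x ≠ ⊤ := by
    intro t; rw [hgt_eq t]; exact mulpos_ne_top (het t).1 (hftx_top t)
  have hg_conv : ∀ t, EConvexOn' (g t) := by
    intro t; rw [hgt_eq t]
    exact econvex_smul (het t).1 (fun y => (hf t).1 y) (hf t).2.2.1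
  have hg_lsc : ∀ t, LowerSemicontinuous (g t) := by
    intro t; rw [hgt_eq t]
    exact elsc_smul (het t).1 (fun y => (hf t).1 y) (hf t).2.2.2
  set S : Set (WeakDual ℝ X) := ⋃ t, esubdiff (g t) x ε with hSdef
  set C : Set (WeakDual ℝ X) := cclo S with hCdef
  have hSC : S ⊆ C := subset_trans (subset_convexHull ℝ S) subset_closure
  have hC_closed : IsClosed C := isClosed_closure
  have hC_conv : Convex ℝ C := (convex_convexHull ℝ S).closure
  have hiInf_ne_top : (⨅ t, g t x) ≠ ⊤ := by
    intro h
    have hle := iInf_le (fun t => g t x) t₀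
    rw [h] at hle
    exact hg_x_top t₀ (top_le_iff.mp hle)
  set m : ℝ := (⨅ t, g t x).toReal with hmdef
  have hm : ∀ t, (m : EReal) ≤ g t x := by
    intro t
    rw [hmdef, EReal.coe_toReal hiInf_ne_top hinf.ne']
    exact iInf_le _ t
  ext p
  constructor
  · -- the hard inclusion: normal cone ⊆ recession cone
    rintro ⟨hxA, hpN⟩
    -- nonemptiness of C
    have hray0 : ∀ l : ℝ, l ∈ Set.Icc (0:ℝ) 1 →
        (((g t₀ x).toReal - ε + 0 * l : ℝ) : EReal) < g t₀ (x + l • (0:X)) := by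
      intro l _
      rw [smul_zero, add_zero, zero_mul, add_zero]
      conv_rhs => rw [← EReal.coe_toReal (hg_x_top t₀) (hg_bot t₀ x)]
      exact_mod_cast sub_lt_self _ hε
    obtain ⟨q₀, hq₀S, -⟩ := exists_esubdiff_gt (g t₀) (hg_bot t₀) (hg_conv t₀) (hg_lsc t₀)
      (hg_x_top t₀) hε (0:X) 0 one_pos hray0
    have hq₀C : q₀ ∈ C := hSC (mem_iUnion.mpr ⟨t₀, hq₀S⟩)
    refine ⟨q₀, hq₀C, ?_⟩
    intro l hl
    by_contra hout
    obtain ⟨Φ, u, hCu, huΦ⟩ := geometric_hahn_banach_closed_point hC_conv hC_closed hout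
    obtain ⟨z, hz⟩ := weakDual_dual_eval Φ
    rw [hz, wd_add_smul_apply] at huΦ
    have hq₀z : q₀ z < u := by
      have := hCu q₀ hq₀C; rwa [hz] at this
    have hlpz : 0 < l * p z := by linarith
    have hpz : 0 < p z := by
      by_contra hple
      push_neg at hple
      exact absurd hlpz (not_lt.mpr (mul_nonpos_of_nonneg_of_nonpos hl hple))
    -- for each t, the ray from x in direction z meets the domain of f t
    have hper : ∀ t, ∃ lt : ℝ, (0 < lt ∧ lt ≤ 1) ∧ f t (x + lt • z) ≠ ⊤ := by
      intro t
      by_contra hcon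
      push_neg at hcon
      have hrayt : ∀ l' : ℝ, l' ∈ Set.Icc (0:ℝ) 1 →
          (((g t x).toReal - ε + (u + ε) * l' : ℝ) : EReal) < g t (x + l' • z) := by
        intro l' hl'
        rcases eq_or_lt_of_le hl'.1 with h0 | h0
        · rw [← h0, zero_smul, add_zero, mul_zero, add_zero]
          conv_rhs => rw [← EReal.coe_toReal (hg_x_top t) (hg_bot t x)]
          exact_mod_cast sub_lt_self _ hε
        · have htop : f t (x + l' • z) = ⊤ := hcon l' ⟨h0, hl'.2⟩
          rw [hgt_eq t]
          show _ < (et t : EReal) * f t (x + l' • z)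
          rw [htop, EReal.coe_mul_top_of_pos (het t).1]
          exact EReal.coe_lt_top _
      obtain ⟨q, hqS, hqz⟩ := exists_esubdiff_gt (g t) (hg_bot t) (hg_conv t) (hg_lsc t)
        (hg_x_top t) hε z (u + ε) one_pos hrayt
      rw [div_one] at hqz
      have hqC : q ∈ C := hSC (mem_iUnion.mpr ⟨t, hqS⟩)
      have := hCu q hqC
      rw [hz] at this
      linarith
    choose L hL hLtop using hper
    have hN' : ∀ t, ∃ nt : ℝ, f t (x + L t • z) < (nt : EReal) := by
      intro t
      refine ⟨(f t (x + L t • z)).toReal + 1, ?_⟩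
      calc f t (x + L t • z) ≤ ((f t (x + L t • z)).toReal : EReal) :=
            EReal.le_coe_toReal (hLtop t)
        _ < (((f t (x + L t • z)).toReal + 1 : ℝ) : EReal) := by
            exact_mod_cast lt_add_one _
    choose N hN using hN'
    set O : T → Set T := fun t => {t' | f t' (x + L t • z) < (N t : EReal)} with hOdef
    have hOopen : ∀ t, IsOpen (O t) := by
      intro t
      rw [isOpen_iff_mem_nhds]
      intro t' ht'
      exact husc (x + L t • z) t' (N t) ht'
    obtain ⟨sfin, hsfin⟩ := isCompact_univ.elim_finite_subcover O hOopen
      (fun t _ => mem_iUnion.mpr ⟨t, hN t⟩)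
    have hsne : sfin.Nonempty := by
      rcases Finset.eq_empty_or_nonempty sfin with h | h
      · exfalso
        have := hsfin (mem_univ t₀)
        rw [h] at this
        simpa using this
      · exact h
    set lam : ℝ := sfin.inf' hsne L with hlamdef
    have hlam_pos : 0 < lam := by
      rw [hlamdef, Finset.lt_inf'_iff]
      exact fun i _ => (hL i).1
    -- x + lam • z is in the domain of F
    have hFx_bot : F x ≠ ⊥ := by
      intro h
      have hle : f t₀ x ≤ F x := le_iSup (fun t => f t x) t₀
      rw [h] at hle
      exact hftx_bot t₀ (le_bot_iff.mp hle)
    set Mx : ℝ := max (F x).toReal 0 with hMxdef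
    set MN : ℝ := sfin.sup' hsne (fun i => max (N i) 0) with hMNdef
    have hbound : ∀ t', f t' (x + lam • z) ≤ ((Mx + MN : ℝ) : EReal) := by
      intro t'
      have ht'mem := hsfin (mem_univ t')
      rw [mem_iUnion₂] at ht'mem
      obtain ⟨i, hi, hti⟩ := ht'mem
      have hLiz : f t' (x + L i • z) < (N i : EReal) := hti
      have hlam_le : lam ≤ L i := Finset.inf'_le L hi
      set a : ℝ := 1 - lam / L i with hadef
      set b : ℝ := lam / L i with hbdef
      have hLi_pos : 0 < L i := (hL i).1
      have hb0 : 0 ≤ b := by positivity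
      have hb1 : b ≤ 1 := by
        rw [hbdef, div_le_one hLi_pos]; exact hlam_le
      have ha0 : 0 ≤ a := by rw [hadef]; linarith
      have ha1 : a ≤ 1 := by
        rw [hadef]
        have : 0 ≤ lam / L i := hb0
        linarith
      have hcomb : a • x + b • (x + L i • z) = x + lam • z := by
        have hbl : b * L i = lam := div_mul_cancel₀ lam hLi_pos.ne'
        rw [smul_add, smul_smul, hbl, ← add_assoc, ← add_smul,
          (by rw [hadef, hbdef]; ring : a + b = 1), one_smul]
      have h1 := (hf t').2.2.1 x (x + L i • z) a b ha0 hb0 (by rw [hadef, hbdef]; ring)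
      rw [hcomb] at h1
      have h2 : (a : EReal) * f t' x ≤ ((Mx : ℝ) : EReal) := by
        have hfx_le : f t' x ≤ ((Mx : ℝ) : EReal) := by
          calc f t' x ≤ F x := le_iSup (fun t => f t x) t'
            _ = ((F x).toReal : EReal) := (EReal.coe_toReal hFx hFx_bot).symm
            _ ≤ ((Mx : ℝ) : EReal) := by exact_mod_cast le_max_left _ _
        calc (a : EReal) * f t' x ≤ (a : EReal) * ((Mx : ℝ) : EReal) :=
              mul_le_mul_of_nonneg_left hfx_le (by exact_mod_cast ha0)
          _ ≤ 1 * ((Mx : ℝ) : EReal) := by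
              apply mul_le_mul_of_nonneg_right (by exact_mod_cast ha1)
              exact_mod_cast le_max_right (F x).toReal 0
          _ = ((Mx : ℝ) : EReal) := one_mul _
      have h3 : (b : EReal) * f t' (x + L i • z) ≤ ((MN : ℝ) : EReal) := by
        have hfz_le : f t' (x + L i • z) ≤ ((MN : ℝ) : EReal) := by
          calc f t' (x + L i • z) ≤ (N i : EReal) := hLiz.le
            _ ≤ ((max (N i) 0 : ℝ) : EReal) := by exact_mod_cast le_max_left _ _
            _ ≤ ((MN : ℝ) : EReal) := by
                exact_mod_cast Finset.le_sup' (fun i => max (N i) 0) hi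
        calc (b : EReal) * f t' (x + L i • z) ≤ (b : EReal) * ((MN : ℝ) : EReal) :=
              mul_le_mul_of_nonneg_left hfz_le (by exact_mod_cast hb0)
          _ ≤ 1 * ((MN : ℝ) : EReal) := by
              apply mul_le_mul_of_nonneg_right (by exact_mod_cast hb1)
              have h0MN : (0:ℝ) ≤ MN := by
                obtain ⟨j, hj⟩ := hsne
                calc (0:ℝ) ≤ max (N j) 0 := le_max_right _ _
                  _ ≤ MN := Finset.le_sup' (fun i => max (N i) 0) hj
              exact_mod_cast h0MN
          _ = ((MN : ℝ) : EReal) := one_mul _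
      calc f t' (x + lam • z) ≤ (a : EReal) * f t' x + (b : EReal) * f t' (x + L i • z) := h1
        _ ≤ ((Mx : ℝ) : EReal) + ((MN : ℝ) : EReal) := add_le_add h2 h3
        _ = ((Mx + MN : ℝ) : EReal) := (EReal.coe_add _ _).symm
    have hFlam : F (x + lam • z) ≠ ⊤ := by
      intro htop
      have hle : F (x + lam • z) ≤ ((Mx + MN : ℝ) : EReal) := iSup_le hbound
      rw [htop] at hle
      exact (EReal.coe_ne_top (Mx + MN)) (top_le_iff.mp hle)
    have hple := hpN _ hFlam
    have hplin : p (x + lam • z) = p x + lam * p z := by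
      rw [map_add, map_smul]; simp [smul_eq_mul]
    rw [hplin] at hple
    have := mul_pos hlam_pos hpz
    linarith
  · -- the easy inclusion: recession cone ⊆ normal cone
    rintro ⟨c, hcC, hcl⟩
    refine ⟨hx, ?_⟩
    intro y hy
    have hy' : F y ≠ ⊤ := hy
    have hFy_bot : F y ≠ ⊥ := by
      intro h
      have hle : f t₀ y ≤ F y := le_iSup (fun t => f t y) t₀
      rw [h] at hle
      exact (hf t₀).1 y (le_bot_iff.mp hle)
    set My : ℝ := max (F y).toReal 0 - m + ε with hMydef
    have hSbound : ∀ q ∈ S, q y - q x ≤ My := by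
      intro q hq
      obtain ⟨t, hqt⟩ := mem_iUnion.mp hq
      obtain ⟨-, -, -, hineq⟩ := hqt
      have h1 := hineq y
      have h2 : g t y ≤ ((max (F y).toReal 0 : ℝ) : EReal) := by
        rw [hgt_eq t]
        rcases le_or_gt (f t y) 0 with hle | hlt
        · calc (et t : EReal) * f t y ≤ (et t : EReal) * 0 :=
              mul_le_mul_of_nonneg_left hle (by exact_mod_cast (het t).1.le)
            _ = 0 := mul_zero _
            _ ≤ _ := by exact_mod_cast le_max_right (F y).toReal 0
        · have hfy : f t y ≤ (((F y).toReal : ℝ) : EReal) := by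
            rw [EReal.coe_toReal hy' hFy_bot]
            exact le_iSup (fun t => f t y) t
          calc (et t : EReal) * f t y ≤ 1 * f t y :=
              mul_le_mul_of_nonneg_right (by exact_mod_cast (het t).2) hlt.le
            _ = f t y := one_mul _
            _ ≤ (((F y).toReal : ℝ) : EReal) := hfy
            _ ≤ _ := by exact_mod_cast le_max_left (F y).toReal 0
      have h3 : ((m + (q y - q x - ε) : ℝ) : EReal) ≤ ((max (F y).toReal 0 : ℝ) : EReal) :=
        calc ((m + (q y - q x - ε) : ℝ) : EReal)
            = (m : EReal) + ((q y - q x - ε : ℝ) : EReal) := EReal.coe_add _ _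
          _ ≤ g t x + ((q y - q x - ε : ℝ) : EReal) := add_le_add_left (hm t) _
          _ ≤ g t y := h1
          _ ≤ _ := h2
      have h4 := EReal.coe_le_coe_iff.mp h3
      rw [hMydef]; linarith
    set H : Set (WeakDual ℝ X) := {q | q y - q x ≤ My} with hHdef
    have hH_closed : IsClosed H :=
      isClosed_le ((WeakDual.eval_continuous y).sub (WeakDual.eval_continuous x))
        continuous_const
    have hH_conv : Convex ℝ H := by
      intro q1 hq1 q2 hq2 a b ha hb hab
      simp only [hHdef, mem_setOf_eq] at hq1 hq2 ⊢
      have e1 : (a • q1 + b • q2) y = a * q1 y + b * q2 y := by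
        have h := (evW y).map_add (a • q1) (b • q2)
        rw [map_smul, map_smul] at h
        simpa [evW_apply, smul_eq_mul] using h
      have e2 : (a • q1 + b • q2) x = a * q1 x + b * q2 x := by
        have h := (evW x).map_add (a • q1) (b • q2)
        rw [map_smul, map_smul] at h
        simpa [evW_apply, smul_eq_mul] using h
      rw [e1, e2]
      have hq1' := mul_le_mul_of_nonneg_left hq1 ha
      have hq2' := mul_le_mul_of_nonneg_left hq2 hb
      have : a * (q1 y - q1 x) + b * (q2 y - q2 x) ≤ a * My + b * My := add_le_add hq1' hq2'
      have heq : a * My + b * My = My := by rw [← add_mul, hab, one_mul]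
      nlinarith [this]
    have hCH : C ⊆ H := closure_minimal (convexHull_min hSbound hH_conv) hH_closed
    by_contra hpos
    push_neg at hpos
    set l : ℝ := (My - (c y - c x)) / (p y - p x) + 1 with hldef
    have hnum : c y - c x ≤ My := hCH hcC
    have hl0 : 0 ≤ l := by
      rw [hldef]
      have : 0 ≤ (My - (c y - c x)) / (p y - p x) :=
        div_nonneg (by linarith) (by linarith)
      linarith
    have hcl' := hCH (hcl l hl0)
    simp only [hHdef, mem_setOf_eq] at hcl'
    rw [wd_add_smul_apply, wd_add_smul_apply] at hcl'
    have hlmul : l * (p y - p x) = (My - (c y - c x)) + (p y - p x) := by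
      rw [hldef]
      field_simp
    have e : l * (p y - p x) = l * p y - l * p x := by ring
    linarith
end
end

section
/- Let {f_t : t ∈ T} ⊂ Γ₀(X) be a nonempty family, f := sup_{t∈T} f_t, x ∈ dom f, and ε > 0. Define ε_t := −ε / (2 f_t(x) − 2 f(x) + ε) for t ∈ T \ T_ε(x) and ε_t := 1 for t ∈ T_ε(x). Then 0 < ε_t < 1 for all t ∈ T \ T_ε(x), and, provided the standard hypothesis (SH) holds, N_{dom f}(x) = [ co‾( (⋃_{t∈T_ε(x)} ∂_ε f_t(x)) ∪ (⋃_{t∈T\T_ε(x)} ∂_ε(ε_t f_t)(x)) ) ]_∞, where (ε_t f_t)(z) := ε_t f_t(z). -/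
open Set Pointwise Topology
open scoped Classical

noncomputable section

variable {X : Type*} [AddCommGroup X] [Module ℝ X] [TopologicalSpace X]
  [IsTopologicalAddGroup X] [ContinuousSMul ℝ X] [LocallyConvexSpace ℝ X] [T2Space X]

set_option linter.unusedSectionVars false

private lemma ereal_coe_mul_div_cancel {l : ℝ} (hl : l ≠ 0) (x : EReal) :
    ((l : EReal) * x) / (l : EReal) = x := by
  rw [mul_comm, division_def, mul_assoc, ← division_def,
    EReal.div_self (EReal.coe_ne_bot l) (EReal.coe_ne_top l) (by exact_mod_cast hl), mul_one]

private lemma ereal_mul_lt_mul_left {l : ℝ} (hl : 0 < l) {a b : EReal} (h : a < b) :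
    (l : EReal) * a < (l : EReal) * b := by
  refine lt_of_le_of_ne
    (mul_le_mul_of_nonneg_left h.le (by exact_mod_cast hl.le)) fun he => ?_
  have h2 := congrArg (· / (l : EReal)) he
  simp only [ereal_coe_mul_div_cancel hl.ne'] at h2
  exact h.ne h2

private lemma ereal_mul_ne_bot {l : ℝ} (hl : 0 < l) {w : EReal} (hw : w ≠ ⊥) :
    (l : EReal) * w ≠ ⊥ := by
  induction w using EReal.rec with
  | bot => exact absurd rfl hw
  | coe r => rw [← EReal.coe_mul]; exact EReal.coe_ne_bot _
  | top => rw [EReal.coe_mul_top_of_pos hl]; simp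

private lemma lsc_const_mul {g : X → EReal} (hg : LowerSemicontinuous g) {l : ℝ} (hl : 0 < l) :
    LowerSemicontinuous fun z => (l : EReal) * g z := by
  intro x c hc
  have h1 : c / (l : EReal) < g x := by
    have h2 := EReal.strictMono_div_right_of_pos (b := (l : EReal))
      (by exact_mod_cast hl) (EReal.coe_ne_top l) hc
    dsimp only at h2
    rwa [ereal_coe_mul_div_cancel hl.ne'] at h2
  filter_upwards [hg x _ h1] with y hy
  have h3 := ereal_mul_lt_mul_left hl hy
  rwa [EReal.mul_div_cancel (EReal.coe_ne_bot l) (EReal.coe_ne_top l)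
    (by exact_mod_cast hl.ne')] at h3

private lemma econvex_const_mul {g : X → EReal} (hg : EConvexOn' g) (hbot : ∀ y, g y ≠ ⊥)
    {l : ℝ} (hl : 0 < l) : EConvexOn' (fun z => (l : EReal) * g z) := by
  intro u v a b ha hb hab
  dsimp only
  rcases ha.eq_or_lt with h0 | ha'
  · have hb1 : b = 1 := by linarith
    subst hb1
    simp [← h0]
  rcases hb.eq_or_lt with h0 | hb'
  · have ha1 : a = 1 := by linarith
    subst ha1
    simp [← h0]
  have hmulbot : ∀ w : X, (b : EReal) * ((l : EReal) * g w) ≠ ⊥ :=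
    fun w => ereal_mul_ne_bot hb' (ereal_mul_ne_bot hl (hbot w))
  have hmulbot' : ∀ w : X, (a : EReal) * ((l : EReal) * g w) ≠ ⊥ :=
    fun w => ereal_mul_ne_bot ha' (ereal_mul_ne_bot hl (hbot w))
  by_cases hu : g u = ⊤
  · rw [hu, EReal.coe_mul_top_of_pos hl, EReal.mul_top_of_pos (by exact_mod_cast ha'),
      EReal.top_add_of_ne_bot (hmulbot v)]
    exact le_top
  by_cases hv : g v = ⊤
  · rw [hv, EReal.coe_mul_top_of_pos hl, EReal.mul_top_of_pos (by exact_mod_cast hb'),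
      EReal.add_top_of_ne_bot (hmulbot' u)]
    exact le_top
  have hgu : g u = ((g u).toReal : EReal) := (EReal.coe_toReal hu (hbot u)).symm
  have hgv : g v = ((g v).toReal : EReal) := (EReal.coe_toReal hv (hbot v)).symm
  have h := hg u v a b ha hb hab
  rw [hgu, hgv, ← EReal.coe_mul, ← EReal.coe_mul, ← EReal.coe_add] at h
  calc (l : EReal) * g (a • u + b • v)
      ≤ (l : EReal) * ((a * (g u).toReal + b * (g v).toReal : ℝ) : EReal) :=
        mul_le_mul_of_nonneg_left h (by exact_mod_cast hl.le)
    _ = ((l * (a * (g u).toReal + b * (g v).toReal) : ℝ) : EReal) := by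
        rw [← EReal.coe_mul]
    _ = (a : EReal) * ((l : EReal) * ((g u).toReal : EReal)) +
        (b : EReal) * ((l : EReal) * ((g v).toReal : EReal)) := by
        rw [← EReal.coe_mul, ← EReal.coe_mul, ← EReal.coe_mul, ← EReal.coe_mul,
          ← EReal.coe_add]
        norm_cast
        ring
    _ = (a : EReal) * ((l : EReal) * g u) + (b : EReal) * ((l : EReal) * g v) := by
        rw [← hgu, ← hgv]
set_option linter.unusedSectionVars false

private def epig (g : X → EReal) : Set (X × ℝ) := {q | g q.1 ≤ (q.2 : EReal)}

private lemma isClosed_epig {g : X → EReal} (hg : LowerSemicontinuous g) :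
    IsClosed (epig g) := by
  rw [← isOpen_compl_iff, isOpen_iff_mem_nhds]
  rintro ⟨y, r⟩ hq
  simp only [epig, mem_compl_iff, mem_setOf_eq, not_le] at hq
  obtain ⟨c, hc1, hc2⟩ := EReal.exists_between_coe_real hq
  have hA : ∀ᶠ w in 𝓝 y, (c : EReal) < g w := hg y _ hc2
  have hB : ∀ᶠ s in 𝓝 r, s < c :=
    Filter.eventually_iff_exists_mem.2
      ⟨Iio c, Iio_mem_nhds (by exact_mod_cast hc1), fun s hs => hs⟩
  filter_upwards [hA.prod_nhds hB] with w hw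
  simp only [epig, mem_compl_iff, mem_setOf_eq, not_le]
  exact lt_trans (by exact_mod_cast hw.2) hw.1

private lemma convex_epig {g : X → EReal} (hconv : EConvexOn' g) (hbot : ∀ y, g y ≠ ⊥) :
    Convex ℝ (epig g) := by
  rintro ⟨y1, r1⟩ h1 ⟨y2, r2⟩ h2 a b ha hb hab
  simp only [epig, mem_setOf_eq] at h1 h2 ⊢
  have hy1 : g y1 ≠ ⊤ := fun h => by simp [h] at h1
  have hy2 : g y2 ≠ ⊤ := fun h => by simp [h] at h2
  have hgu : g y1 = ((g y1).toReal : EReal) := (EReal.coe_toReal hy1 (hbot y1)).symm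
  have hgv : g y2 = ((g y2).toReal : EReal) := (EReal.coe_toReal hy2 (hbot y2)).symm
  have hu : (g y1).toReal ≤ r1 := by rw [hgu] at h1; exact_mod_cast h1
  have hv : (g y2).toReal ≤ r2 := by rw [hgv] at h2; exact_mod_cast h2
  have h := hconv y1 y2 a b ha hb hab
  rw [hgu, hgv, ← EReal.coe_mul, ← EReal.coe_mul, ← EReal.coe_add] at h
  have hsnd : (a • (y1, r1) + b • (y2, r2)).2 = a * r1 + b * r2 := rfl
  have hfst : (a • (y1, r1) + b • (y2, r2)).1 = a • y1 + b • y2 := rfl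
  rw [hsnd, hfst]
  refine h.trans ?_
  exact_mod_cast (by nlinarith : a * (g y1).toReal + b * (g y2).toReal ≤ a * r1 + b * r2)

private lemma exists_esub {g : X → EReal} (hconv : EConvexOn' g) (hlsc : LowerSemicontinuous g)
    (hbot : ∀ y, g y ≠ ⊥) {x : X} (hgx : g x ≠ ⊤) {ε : ℝ} (hε : 0 < ε) (z : X) (M : ℝ)
    (hray : ∀ l : ℝ, 0 < l → l ≤ 1 →
      ¬ g (x + l • z) ≤ (((g x).toReal - ε + l * M : ℝ) : EReal)) :
    ∃ p : WeakDual ℝ X, p ∈ esubdiff g x ε ∧ M - ε < p z := by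
  set t0 := (g x).toReal with ht0
  have hgxr : g x = (t0 : EReal) := (EReal.coe_toReal hgx (hbot x)).symm
  set P0 : X × ℝ := (x, t0 - ε) with hP0
  set P1 : X × ℝ := (x + z, t0 - ε + M) with hP1
  have hcomp : ∀ l : ℝ, (1 - l) • P0 + l • P1 = (x + l • z, t0 - ε + l * M) := by
    intro l
    rw [hP0, hP1, Prod.smul_mk, Prod.smul_mk, Prod.mk_add_mk]
    refine Prod.ext ?_ ?_
    · simp only [smul_add]
      rw [sub_smul, one_smul]
      abel
    · simp only [smul_eq_mul]
      ring
  have hKcp : IsCompact (segment ℝ P0 P1) := by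
    rw [segment_eq_image ℝ]
    exact isCompact_Icc.image (by fun_prop)
  have hdisj : Disjoint (segment ℝ P0 P1) (epig g) := by
    rw [Set.disjoint_left]
    intro q hqK hqE
    rw [segment_eq_image ℝ] at hqK
    obtain ⟨l, hl, rfl⟩ := hqK
    dsimp only at hqE
    rw [hcomp l] at hqE
    simp only [epig, mem_setOf_eq] at hqE
    rcases hl.1.eq_or_lt with h0 | h0
    · rw [← h0] at hqE
      simp only [zero_smul, add_zero, zero_mul] at hqE
      rw [hgxr] at hqE
      have : t0 ≤ t0 - ε := by exact_mod_cast hqE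
      linarith
    · exact hray l h0 hl.2 hqE
  obtain ⟨ψ, u, v, hKu, huv, hEv⟩ := geometric_hahn_banach_compact_closed
    (convex_segment _ _) hKcp (convex_epig hconv hbot) (isClosed_epig hlsc) hdisj
  set α : ℝ := ψ (0, 1) with hαdef
  set L : X →L[ℝ] ℝ := ψ.comp (ContinuousLinearMap.inl ℝ X ℝ) with hLdef
  have hψ : ∀ (y : X) (r : ℝ), ψ (y, r) = L y + r * α := by
    intro y r
    have hyr : ((y, r) : X × ℝ) = ((y, 0) : X × ℝ) + r • ((0, 1) : X × ℝ) := by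
      rw [Prod.smul_mk, Prod.mk_add_mk]
      simp
    rw [hyr, map_add, map_smul, smul_eq_mul]
    rfl
  have hE : ∀ (y : X) (r : ℝ), g y ≤ (r : EReal) → v < L y + r * α := by
    intro y r h
    have := hEv (y, r) h
    rwa [hψ] at this
  have hKP : ∀ l ∈ Icc (0 : ℝ) 1, L (x + l • z) + (t0 - ε + l * M) * α < u := by
    intro l hl
    have hmem : (1 - l) • P0 + l • P1 ∈ segment ℝ P0 P1 := by
      rw [segment_eq_image ℝ]
      exact ⟨l, hl, rfl⟩
    have := hKu _ hmem
    rwa [hcomp l, hψ] at this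
  have hx_epi : ∀ n : ℝ, 0 ≤ n → v < L x + (t0 + n) * α := by
    intro n hn
    exact hE x (t0 + n) (by rw [hgxr]; exact_mod_cast (by linarith : t0 ≤ t0 + n))
  have hα : 0 ≤ α := by
    by_contra hneg
    push_neg at hneg
    obtain ⟨n, hn⟩ := exists_nat_gt (max 0 ((v - L x - t0 * α) / α))
    have hn0 : (0 : ℝ) ≤ n := le_trans (le_max_left _ _) hn.le
    have h2 : (v - L x - t0 * α) / α < n := lt_of_le_of_lt (le_max_right _ _) hn
    have h3 := (div_lt_iff_of_neg hneg).1 h2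
    have h4 := hx_epi n hn0
    nlinarith
  rcases hα.eq_or_lt with hα0 | hαpos
  · exfalso
    have h1 := hKP 0 ⟨le_refl _, zero_le_one⟩
    have h2 := hE x t0 (le_of_eq hgxr)
    rw [← hα0] at h1 h2
    simp only [zero_smul, add_zero, mul_zero] at h1 h2
    linarith
  · set p : WeakDual ℝ X := show WeakDual ℝ X from (-(α⁻¹)) • L with hpdef
    have hp_apply : ∀ y : X, p y = -(L y) / α := by
      intro y
      show -(α⁻¹) * L y = -(L y) / α
      field_simp
    have h10 := hKP 0 ⟨le_refl _, zero_le_one⟩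
    simp only [zero_smul, add_zero, zero_mul] at h10
    refine ⟨p, ⟨hε.le, hgx, hbot x, ?_⟩, ?_⟩
    · intro y
      by_cases hy : g y = ⊤
      · rw [hy]; exact le_top
      · have hyr : g y = ((g y).toReal : EReal) := (EReal.coe_toReal hy (hbot y)).symm
        have h2 := hE y (g y).toReal (le_of_eq hyr)
        rw [hgxr, hyr, hp_apply y, hp_apply x, ← EReal.coe_add]
        have hkey : (t0 - ε) * α + (L x - L y) ≤ (g y).toReal * α := by nlinarith
        have hdiv : (L x - L y) / α ≤ (g y).toReal - t0 + ε := by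
          rw [div_le_iff₀ hαpos]; nlinarith
        have : t0 + (-(L y) / α - -(L x) / α - ε) ≤ (g y).toReal := by
          have hr : -(L y) / α - -(L x) / α = (L x - L y) / α := by ring
          rw [hr]; linarith
        exact_mod_cast this
    · have h11 := hKP 1 ⟨zero_le_one, le_refl _⟩
      rw [one_smul, map_add] at h11
      have h2 := hE x t0 (le_of_eq hgxr)
      have h11' : L x + L z + (t0 * α - ε * α + M * α) < u := by
        have hr : (t0 - ε + 1 * M) * α = t0 * α - ε * α + M * α := by ring
        rw [hr] at h11
        linarith
      rw [hp_apply z, lt_div_iff₀ hαpos]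
      have hg1 : (M - ε) * α = M * α - ε * α := by ring
      rw [hg1]
      linarith

private lemma ereal_interp {g : X → EReal} (hconv : EConvexOn' g) {x z : X}
    {lam mu : ℝ} (h0 : 0 < mu) (hml : mu ≤ lam) {c d : ℝ}
    (hxc : g x ≤ (c : EReal)) (hl : g (x + lam • z) ≤ (d : EReal)) :
    g (x + mu • z) ≤ ((max c d : ℝ) : EReal) := by
  have hlam : 0 < lam := lt_of_lt_of_le h0 hml
  set a := mu / lam with ha_def
  have ha : 0 < a := div_pos h0 hlam
  have ha1 : a ≤ 1 := (div_le_one hlam).2 hml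
  have hpt : a • (x + lam • z) + (1 - a) • x = x + mu • z := by
    rw [smul_add, smul_smul, sub_smul, one_smul]
    have : a * lam = mu := div_mul_cancel₀ mu hlam.ne'
    rw [this]
    abel
  have h := hconv (x + lam • z) x a (1 - a) ha.le (by linarith) (by ring)
  rw [hpt] at h
  refine h.trans ?_
  have h1 : (a : EReal) * g (x + lam • z) ≤ ((a * d : ℝ) : EReal) := by
    calc (a : EReal) * g (x + lam • z) ≤ (a : EReal) * (d : EReal) :=
          mul_le_mul_of_nonneg_left hl (by exact_mod_cast ha.le)
      _ = ((a * d : ℝ) : EReal) := by rw [← EReal.coe_mul]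
  have h2 : ((1 - a : ℝ) : EReal) * g x ≤ (((1 - a) * c : ℝ) : EReal) := by
    calc ((1 - a : ℝ) : EReal) * g x ≤ ((1 - a : ℝ) : EReal) * (c : EReal) :=
          mul_le_mul_of_nonneg_left hxc (by exact_mod_cast (by linarith : (0:ℝ) ≤ 1 - a))
      _ = (((1 - a) * c : ℝ) : EReal) := by rw [← EReal.coe_mul]
  calc (a : EReal) * g (x + lam • z) + ((1 - a : ℝ) : EReal) * g x
      ≤ ((a * d : ℝ) : EReal) + (((1 - a) * c : ℝ) : EReal) := add_le_add h1 h2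
    _ = ((a * d + (1 - a) * c : ℝ) : EReal) := by rw [← EReal.coe_add]
    _ ≤ ((max c d : ℝ) : EReal) := by
        exact_mod_cast (by nlinarith [le_max_left c d, le_max_right c d] :
          a * d + (1 - a) * c ≤ max c d)

private lemma feasible_step {T : Type*} [TopologicalSpace T] [CompactSpace T]
    (f : T → X → EReal) (hconv : ∀ t, EConvexOn' (f t))
    (husc : ∀ w : X, UpperSemicontinuous fun t => f t w)
    (x z : X) (c0 : ℝ) (hc0 : ∀ t, f t x ≤ (c0 : EReal))
    (hbot : ∀ t y, f t y ≠ ⊥)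
    (hz : ∀ t, ∃ l : ℝ, 0 < l ∧ f t (x + l • z) ≠ ⊤) :
    ∃ l : ℝ, 0 < l ∧ (⨆ t, f t (x + l • z)) ≠ ⊤ := by
  set U : ℕ → Set T := fun n =>
    (fun t => f t (x + (1 / ((n : ℝ) + 1)) • z)) ⁻¹' Iio (((n : ℝ) : EReal)) with hU
  have hUopen : ∀ n, IsOpen (U n) := fun n =>
    (upperSemicontinuous_iff_isOpen_preimage.1 (husc _)) _
  have hUcov : (univ : Set T) ⊆ ⋃ n, U n := by
    intro t _
    obtain ⟨l, hl, hne⟩ := hz t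
    have hdval : f t (x + l • z) ≤ ((f t (x + l • z)).toReal : EReal) :=
      le_of_eq (EReal.coe_toReal hne (hbot t _)).symm
    set d := (f t (x + l • z)).toReal
    obtain ⟨n, hn⟩ := exists_nat_gt (max (1 / l) (max c0 d))
    refine mem_iUnion.2 ⟨n, ?_⟩
    have h1n : (0 : ℝ) < 1 / ((n : ℝ) + 1) := by positivity
    have hle : (1 / ((n : ℝ) + 1) : ℝ) ≤ l := by
      have hgt : 1 / l < (n : ℝ) + 1 :=
        lt_of_le_of_lt (le_max_left _ _) (by linarith)
      rw [div_le_iff₀ (by positivity)]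
      rw [div_lt_iff₀ hl] at hgt
      linarith
    have hkey := ereal_interp (hconv t) h1n hle (hc0 t) hdval
    refine mem_preimage.2 (lt_of_le_of_lt hkey ?_)
    exact_mod_cast lt_of_le_of_lt (le_max_right (1 / l) (max c0 d)) hn
  obtain ⟨s, hs⟩ := isCompact_univ.elim_finite_subcover U hUopen hUcov
  set N := s.sup id with hN
  refine ⟨1 / ((N : ℝ) + 1), by positivity, ?_⟩
  have hb : ∀ t, f t (x + (1 / ((N : ℝ) + 1)) • z) ≤ ((max c0 (N : ℝ) : ℝ) : EReal) := by
    intro t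
    obtain ⟨n, hns, htn⟩ := mem_iUnion₂.1 (hs (mem_univ t))
    have hnN : (n : ℝ) ≤ (N : ℝ) := by exact_mod_cast Finset.le_sup (f := id) hns
    have h1 : (0 : ℝ) < 1 / ((N : ℝ) + 1) := by positivity
    have h2 : (1 / ((N : ℝ) + 1) : ℝ) ≤ 1 / ((n : ℝ) + 1) :=
      one_div_le_one_div_of_le (by positivity) (by linarith)
    have h3 : f t (x + (1 / ((n : ℝ) + 1)) • z) ≤ (((n : ℝ) : ℝ) : EReal) := le_of_lt htn
    have := ereal_interp (hconv t) h1 h2 (hc0 t) h3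
    refine this.trans ?_
    exact_mod_cast max_le_max (le_refl c0) hnN
  intro htop
  have hle : (⨆ t, f t (x + (1 / ((N : ℝ) + 1)) • z)) ≤ ((max c0 (N : ℝ) : ℝ) : EReal) :=
    iSup_le hb
  rw [htop] at hle
  exact (EReal.coe_lt_top _).not_ge hle

private lemma exists_eval (φ : WeakDual ℝ X →L[ℝ] ℝ) :
    ∃ v : X, ∀ p : WeakDual ℝ X, φ p = p v := by
  have hb := LinearMap.hasBasis_weakBilin (topDualPairing ℝ X)
  have hcont : φ ⁻¹' Metric.ball 0 1 ∈ 𝓝 (0 : WeakDual ℝ X) := by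
    have := φ.continuous.continuousAt (x := 0)
    rw [ContinuousAt, map_zero] at this
    exact this (Metric.ball_mem_nhds _ one_pos)
  rcases hb.mem_iff.1 hcont with ⟨U, hU, hUsub⟩
  rcases (topDualPairing ℝ X).toSeminormFamily.basisSets_iff.1 hU with ⟨s, r, hr, rfl⟩
  have key : ∀ p : WeakDual ℝ X, (∀ i ∈ s, p i = 0) → φ p = 0 := by
    intro p hp
    by_contra h0
    have hmem : ∀ c : ℝ, (c • p) ∈ (s.sup (topDualPairing ℝ X).toSeminormFamily).ball 0 r := by
      intro c
      refine (Seminorm.mem_ball_zero _).2 ?_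
      refine lt_of_le_of_lt (Seminorm.finset_sup_apply_le le_rfl ?_) hr
      intro i hi
      refine le_of_eq ?_
      show ‖c * p i‖ = 0
      rw [hp i hi, mul_zero, norm_zero]
    have hlt : ∀ c : ℝ, |c * φ p| < 1 := by
      intro c
      have := hUsub (hmem c)
      change φ (c • p) ∈ Metric.ball (0 : ℝ) 1 at this
      rw [Metric.mem_ball, dist_zero_right] at this
      rwa [map_smul, smul_eq_mul, Real.norm_eq_abs] at this
    have := hlt (φ p)⁻¹
    rw [inv_mul_cancel₀ h0] at this
    norm_num at this
  set L : s → (WeakDual ℝ X) →ₗ[ℝ] ℝ := fun i =>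
    { toFun := fun p => p (i : X)
      map_add' := fun p q => rfl
      map_smul' := fun c p => rfl } with hLdef
  have hker : ⨅ i : s, LinearMap.ker (L i) ≤ LinearMap.ker (φ : WeakDual ℝ X →ₗ[ℝ] ℝ) := by
    intro p hp
    rw [LinearMap.mem_ker]
    refine key p fun i hi => ?_
    have := (Submodule.mem_iInf _).1 hp ⟨i, hi⟩
    exact this
  have hspan := mem_span_of_iInf_ker_le_ker hker
  rcases (Finsupp.mem_span_range_iff_exists_finsupp).1 hspan with ⟨c, hc⟩
  refine ⟨c.sum fun i a => a • (i : X), fun p => ?_⟩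
  have hc' := LinearMap.congr_fun hc p
  show (φ : WeakDual ℝ X →ₗ[ℝ] ℝ) p = p (c.sum fun i a => a • (i : X))
  rw [← hc']
  rw [Finsupp.sum, Finsupp.sum, LinearMap.sum_apply, map_sum]
  refine Finset.sum_congr rfl fun i _ => ?_
  rw [LinearMap.smul_apply, map_smul, smul_eq_mul, smul_eq_mul]
  rfl

private instance inst_s8 : LocallyConvexSpace ℝ (WeakDual ℝ X) :=
  WeakBilin.locallyConvexSpace (B := topDualPairing ℝ X)

private lemma not_mem_cclo {S : Set (WeakDual ℝ X)} {q : WeakDual ℝ X} (hq : q ∉ cclo S) :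
    ∃ (z : X) (u : ℝ), (∀ p ∈ cclo S, p z < u) ∧ u < q z := by
  obtain ⟨φ, u, hCu, hu⟩ := geometric_hahn_banach_closed_point
    (s := cclo S) ((convex_convexHull ℝ S).closure) isClosed_closure hq
  obtain ⟨v, hv⟩ := exists_eval φ
  exact ⟨v, u, fun p hp => hv p ▸ hCu p hp, hv q ▸ hu⟩

private lemma wd_add_apply (p q : WeakDual ℝ X) (v : X) : (p + q) v = p v + q v := rfl

private lemma wd_smul_apply (a : ℝ) (p : WeakDual ℝ X) (v : X) : (a • p) v = a * p v := rfl

/-- Corollary `cp1`: with `ε_t := −ε/(2f_t(x) − 2f(x) + ε)` off the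
`ε`-active set `T_ε(x)` and `ε_t := 1` on it, one has `0 < ε_t < 1` off `T_ε(x)`, and under
(SH) the normal cone to `dom f` at `x` is the recession cone of the closed convex hull of
the corresponding union of ε-subdifferentials. -/
theorem statement8 {T : Type*} [TopologicalSpace T] [CompactSpace T] [T2Space T] [Nonempty T]
    (f : T → X → EReal) (hf : ∀ t, Gamma0 (f t))
    (husc : ∀ z : X, UpperSemicontinuous fun t => f t z)
    (x : X) (hx : x ∈ edom (fun z => ⨆ t, f t z))
    (ε : ℝ) (hε : 0 < ε)
    (et : T → ℝ)
    (het1 : ∀ t, ((⨆ s, f s x) - (ε : EReal) ≤ f t x) → et t = 1)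
    (het2 : ∀ t, ¬((⨆ s, f s x) - (ε : EReal) ≤ f t x) →
      et t = -ε / (2 * (f t x).toReal - 2 * ((⨆ s, f s x)).toReal + ε)) :
    (∀ t, ¬((⨆ s, f s x) - (ε : EReal) ≤ f t x) → 0 < et t ∧ et t < 1) ∧
    normalCone (edom (fun z => ⨆ t, f t z)) x =
      recCone (cclo
        ((⋃ t ∈ {t : T | (⨆ s, f s x) - (ε : EReal) ≤ f t x}, esubdiff (f t) x ε) ∪
         (⋃ t ∈ {t : T | (⨆ s, f s x) - (ε : EReal) ≤ f t x}ᶜ,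
            esubdiff (sMul (et t) (f t)) x ε))) := by
    classical
  have hst : (⨆ s, f s x) ≠ ⊤ := hx
  have hsbot : (⨆ s, f s x) ≠ ⊥ := by
    intro h
    have h2 := le_iSup (fun s => f s x) (Classical.arbitrary T)
    rw [h, le_bot_iff] at h2
    exact (hf (Classical.arbitrary T)).1 x h2
  set r0 := ((⨆ s, f s x)).toReal with hr0def
  have hr0 : (⨆ s, f s x) = (r0 : EReal) := (EReal.coe_toReal hst hsbot).symm
  have hftop : ∀ t, f t x ≠ ⊤ := fun t =>
    ne_top_of_le_ne_top hst (le_iSup (fun s => f s x) t)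
  have hfbot : ∀ t, f t x ≠ ⊥ := fun t => (hf t).1 x
  have hfx : ∀ t, f t x = (((f t x).toReal : ℝ) : EReal) := fun t =>
    (EReal.coe_toReal (hftop t) (hfbot t)).symm
  have hact_iff : ∀ t, ((⨆ s, f s x) - (ε : EReal) ≤ f t x) ↔ (r0 - ε ≤ (f t x).toReal) := by
    intro t
    rw [hr0, hfx t, ← EReal.coe_sub]
    norm_cast
  have hpart1 : ∀ t, ¬((⨆ s, f s x) - (ε : EReal) ≤ f t x) → 0 < et t ∧ et t < 1 := by
    intro t ht
    have hlt : (f t x).toReal < r0 - ε := by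
      have := not_le.1 fun hcon => ht ((hact_iff t).2 hcon)
      linarith
    rw [het2 t ht]
    have hD : 2 * (f t x).toReal - 2 * r0 + ε < -ε := by linarith
    constructor
    · exact div_pos_iff.2 (Or.inr ⟨by linarith, by linarith⟩)
    · rw [show -ε / (2 * (f t x).toReal - 2 * r0 + ε)
          = ε / (-(2 * (f t x).toReal - 2 * r0 + ε)) from by rw [div_neg, neg_div]]
      rw [div_lt_one (by linarith)]
      linarith
  have hl_mul : ∀ t, ¬((⨆ s, f s x) - (ε : EReal) ≤ f t x) →
      et t * (r0 - (f t x).toReal) ≤ ε := by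
    intro t ht
    have hlt : (f t x).toReal < r0 - ε := by
      have := not_le.1 fun hcon => ht ((hact_iff t).2 hcon)
      linarith
    have hdε : ε < r0 - (f t x).toReal := by linarith
    have hetq : et t = ε / (2 * (r0 - (f t x).toReal) - ε) := by
      rw [het2 t ht, show 2 * (f t x).toReal - 2 * r0 + ε
          = -(2 * (r0 - (f t x).toReal) - ε) from by ring, div_neg, neg_div, neg_neg]
    rw [hetq, div_mul_eq_mul_div, div_le_iff₀ (by linarith)]
    nlinarith
  have hsMul_eq : ∀ t, 0 < et t →
      sMul (et t) (f t) = fun w => ((et t : ℝ) : EReal) * f t w := by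
    intro t hpos
    funext w
    simp only [sMul]
    by_cases hw : f t w = ⊤
    · rw [if_pos hw, hw, EReal.coe_mul_top_of_pos hpos]
    · rw [if_neg hw]
  refine ⟨hpart1, ?_⟩
  apply Set.Subset.antisymm
  · -- normalCone ⊆ recCone
    rintro y ⟨hxA, hN⟩
    obtain ⟨t0, ht0⟩ : ∃ t, (⨆ s, f s x) - (ε : EReal) ≤ f t x := by
      have hlt : (⨆ s, f s x) - (ε : EReal) < ⨆ s, f s x := by
        rw [hr0, ← EReal.coe_sub]
        exact_mod_cast (by linarith : r0 - ε < r0)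
      obtain ⟨t, ht⟩ := lt_iSup_iff.1 hlt
      exact ⟨t, ht.le⟩
    obtain ⟨p0, hp0sub, -⟩ := exists_esub (hf t0).2.2.1 (hf t0).2.2.2 ((hf t0).1)
      (hftop t0) hε (0 : X) 0
      (by intro l h1 h2
          rw [smul_zero, add_zero, mul_zero, add_zero]
          rw [hfx t0]
          intro hle
          have : (f t0 x).toReal ≤ (f t0 x).toReal - ε := by exact_mod_cast hle
          linarith)
    have hp0 : p0 ∈ cclo
        ((⋃ t ∈ {t : T | (⨆ s, f s x) - (ε : EReal) ≤ f t x}, esubdiff (f t) x ε) ∪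
         (⋃ t ∈ {t : T | (⨆ s, f s x) - (ε : EReal) ≤ f t x}ᶜ,
            esubdiff (sMul (et t) (f t)) x ε)) :=
      subset_closure (subset_convexHull ℝ _
        (Set.mem_union_left _ (mem_iUnion₂.2 ⟨t0, ht0, hp0sub⟩)))
    refine ⟨p0, hp0, ?_⟩
    intro l hl
    by_contra hnot
    obtain ⟨zz, u, hCu, hu⟩ := not_mem_cclo hnot
    have hc_lt : p0 zz < u := hCu _ hp0
    rw [wd_add_apply, wd_smul_apply] at hu
    have hly : 0 < l * y zz := by linarith
    have hlpos : 0 < l := by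
      rcases hl.eq_or_lt with h | h
      · rw [← h, zero_mul] at hly; linarith
      · exact h
    have hyz : 0 < y zz := by
      rcases mul_pos_iff.1 hly with ⟨-, h⟩ | ⟨h1, -⟩
      · exact h
      · linarith
    have hfeas : ∀ t, ∃ lam : ℝ, 0 < lam ∧ f t (x + lam • zz) ≠ ⊤ := by
      intro t
      by_contra hcon
      push_neg at hcon
      by_cases hact : (⨆ s, f s x) - (ε : EReal) ≤ f t x
      · obtain ⟨p, hpsub, hpz⟩ := exists_esub (hf t).2.2.1 (hf t).2.2.2 ((hf t).1)
          (hftop t) hε zz (u + ε)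
          (by intro l' h1 h2
              rw [hcon l' h1]
              exact fun hle => (EReal.coe_lt_top _).not_ge hle)
        have hmem : p ∈ cclo
            ((⋃ t ∈ {t : T | (⨆ s, f s x) - (ε : EReal) ≤ f t x}, esubdiff (f t) x ε) ∪
             (⋃ t ∈ {t : T | (⨆ s, f s x) - (ε : EReal) ≤ f t x}ᶜ,
                esubdiff (sMul (et t) (f t)) x ε)) :=
          subset_closure (subset_convexHull ℝ _
            (Set.mem_union_left _ (mem_iUnion₂.2 ⟨t, hact, hpsub⟩)))
        have := hCu _ hmem
        linarith
      · have h01 := hpart1 t hact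
        have hGeq := hsMul_eq t h01.1
        have hGconv : EConvexOn' (sMul (et t) (f t)) := by
          rw [hGeq]; exact econvex_const_mul (hf t).2.2.1 ((hf t).1) h01.1
        have hGlsc : LowerSemicontinuous (sMul (et t) (f t)) := by
          rw [hGeq]; exact lsc_const_mul (hf t).2.2.2 h01.1
        have hGbot : ∀ w, sMul (et t) (f t) w ≠ ⊥ := by
          intro w; rw [hGeq]; exact ereal_mul_ne_bot h01.1 ((hf t).1 w)
        have hGx : sMul (et t) (f t) x ≠ ⊤ := by
          rw [hGeq]; dsimp only; rw [hfx t, ← EReal.coe_mul]; exact EReal.coe_ne_top _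
        obtain ⟨p, hpsub, hpz⟩ := exists_esub hGconv hGlsc hGbot hGx hε zz (u + ε)
          (by intro l' h1 h2
              have htop : sMul (et t) (f t) (x + l' • zz) = ⊤ := by
                rw [hGeq]; dsimp only; rw [hcon l' h1]
                exact EReal.coe_mul_top_of_pos h01.1
              rw [htop]
              exact fun hle => (EReal.coe_lt_top _).not_ge hle)
        have hmem : p ∈ cclo
            ((⋃ t ∈ {t : T | (⨆ s, f s x) - (ε : EReal) ≤ f t x}, esubdiff (f t) x ε) ∪
             (⋃ t ∈ {t : T | (⨆ s, f s x) - (ε : EReal) ≤ f t x}ᶜ,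
                esubdiff (sMul (et t) (f t)) x ε)) :=
          subset_closure (subset_convexHull ℝ _
            (Set.mem_union_right _ (mem_iUnion₂.2 ⟨t, hact, hpsub⟩)))
        have := hCu _ hmem
        linarith
    obtain ⟨lam, hlam, hdom⟩ := feasible_step f (fun t => (hf t).2.2.1) husc x zz r0
      (fun t => by rw [← hr0]; exact le_iSup (fun s => f s x) t)
      (fun t y' => (hf t).1 y') hfeas
    have hNle := hN (x + lam • zz) hdom
    rw [map_add, map_smul, smul_eq_mul] at hNle
    nlinarith
  · -- recCone ⊆ normalCone
    rintro y ⟨c, hcC, hray⟩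
    refine ⟨hx, ?_⟩
    intro w hw
    have hwtop : (⨆ t, f t w) ≠ ⊤ := hw
    have hwbot : (⨆ t, f t w) ≠ ⊥ := by
      intro h
      have h2 := le_iSup (fun s => f s w) (Classical.arbitrary T)
      rw [h, le_bot_iff] at h2
      exact (hf (Classical.arbitrary T)).1 w h2
    have hfw_top : ∀ t, f t w ≠ ⊤ := fun t =>
      ne_top_of_le_ne_top hwtop (le_iSup (fun s => f s w) t)
    set rw' := ((⨆ t, f t w)).toReal with hrwdef
    have hrw' : (⨆ t, f t w) = (rw' : EReal) := (EReal.coe_toReal hwtop hwbot).symm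
    set Mw := max 0 (rw' - r0) + 2 * ε with hMw
    set H := {p : WeakDual ℝ X | p w - p x ≤ Mw} with hH
    have hHconv : Convex ℝ H :=
      convex_halfSpace_le
        ⟨fun p q => by rw [wd_add_apply, wd_add_apply]; ring,
         fun a p => by rw [wd_smul_apply, wd_smul_apply, smul_eq_mul]; ring⟩ Mw
    have hHclosed : IsClosed H :=
      isClosed_Iic.preimage ((WeakDual.eval_continuous w).sub (WeakDual.eval_continuous x))
    have hSH : ((⋃ t ∈ {t : T | (⨆ s, f s x) - (ε : EReal) ≤ f t x}, esubdiff (f t) x ε) ∪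
         (⋃ t ∈ {t : T | (⨆ s, f s x) - (ε : EReal) ≤ f t x}ᶜ,
            esubdiff (sMul (et t) (f t)) x ε)) ⊆ H := by
      rintro p (hp | hp)
      · obtain ⟨t, ht, hp⟩ := mem_iUnion₂.1 hp
        obtain ⟨-, -, -, hineq⟩ := hp
        have h := hineq w
        have hfw : f t w = ((f t w).toReal : EReal) :=
          (EReal.coe_toReal (hfw_top t) ((hf t).1 w)).symm
        rw [hfx t, hfw, ← EReal.coe_add] at h
        have hre : (f t x).toReal + (p w - p x - ε) ≤ (f t w).toReal := by
          exact_mod_cast h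
        have hat : r0 - ε ≤ (f t x).toReal := (hact_iff t).1 ht
        have hbt : (f t w).toReal ≤ rw' := by
          have h1 : f t w ≤ (rw' : EReal) := by
            rw [← hrw']; exact le_iSup (fun s => f s w) t
          rw [hfw] at h1; exact_mod_cast h1
        show p w - p x ≤ Mw
        have hm := le_max_right 0 (rw' - r0)
        rw [hMw]; linarith
      · obtain ⟨t, ht, hp⟩ := mem_iUnion₂.1 hp
        have h01 := hpart1 t ht
        have hGeq := hsMul_eq t h01.1
        obtain ⟨-, -, -, hineq⟩ := hp
        have h := hineq w
        rw [hGeq] at h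
        dsimp only at h
        have hfw : f t w = ((f t w).toReal : EReal) :=
          (EReal.coe_toReal (hfw_top t) ((hf t).1 w)).symm
        rw [hfx t, hfw, ← EReal.coe_mul, ← EReal.coe_mul, ← EReal.coe_add] at h
        have hre : et t * (f t x).toReal + (p w - p x - ε) ≤ et t * (f t w).toReal := by
          exact_mod_cast h
        have hbt : (f t w).toReal ≤ rw' := by
          have h1 : f t w ≤ (rw' : EReal) := by
            rw [← hrw']; exact le_iSup (fun s => f s w) t
          rw [hfw] at h1; exact_mod_cast h1
        have hmul := hl_mul t ht
        have hfact : et t * ((f t w).toReal - r0) ≤ max 0 (rw' - r0) := by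
          rcases le_or_gt (f t w).toReal r0 with hle | hgt
          · nlinarith [le_max_left 0 (rw' - r0)]
          · have h5 : et t * ((f t w).toReal - r0) ≤ (f t w).toReal - r0 := by nlinarith
            exact le_trans h5 (le_trans (by linarith) (le_max_right 0 (rw' - r0)))
        show p w - p x ≤ Mw
        rw [hMw]
        nlinarith
    have hcclo_sub : cclo ((⋃ t ∈ {t : T | (⨆ s, f s x) - (ε : EReal) ≤ f t x},
          esubdiff (f t) x ε) ∪
         (⋃ t ∈ {t : T | (⨆ s, f s x) - (ε : EReal) ≤ f t x}ᶜ,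
            esubdiff (sMul (et t) (f t)) x ε)) ⊆ H :=
      closure_minimal (convexHull_min hSH hHconv) hHclosed
    by_contra hpos
    push_neg at hpos
    set l := max 0 ((Mw - (c w - c x)) / (y w - y x) + 1) with hldef
    have hl0 : (0 : ℝ) ≤ l := le_max_left _ _
    have hmem := hcclo_sub (hray l hl0)
    rw [hH] at hmem
    simp only [mem_setOf_eq, wd_add_apply, wd_smul_apply] at hmem
    have h2 : (Mw - (c w - c x)) / (y w - y x) + 1 ≤ l := le_max_right _ _
    have h3 : (Mw - (c w - c x)) / (y w - y x) * (y w - y x) = Mw - (c w - c x) :=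
      div_mul_cancel₀ _ (ne_of_gt hpos)
    nlinarith [mul_le_mul_of_nonneg_right h2 hpos.le]
end
end

section
/- Let {f_t : t ∈ T} ⊂ Γ₀(X) be a nonempty family, f := sup_{t∈T} f_t, and x ∈ dom f with inf_{t∈T} f_t(x) > −∞. Under the standard hypothesis (SH), for every ε > 0 one has N_{dom f}(x) = [ co‾( ⋃_{t∈T} ∂_ε f_t(x) ) ]_∞. -/
open Set Pointwise Topology
open scoped Classical

noncomputable section

variable {X : Type*} [AddCommGroup X] [Module ℝ X] [TopologicalSpace X]
  [IsTopologicalAddGroup X] [ContinuousSMul ℝ X] [LocallyConvexSpace ℝ X] [T2Space X]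

set_option linter.unusedSectionVars false

namespace S9

instance : LocallyConvexSpace ℝ (WeakDual ℝ X) :=
  WeakBilin.locallyConvexSpace (B := topDualPairing ℝ X)
noncomputable instance : IsTopologicalAddGroup (WeakDual ℝ X) :=
  WeakBilin.instIsTopologicalAddGroup (topDualPairing ℝ X)
instance : ContinuousSMul ℝ (WeakDual ℝ X) :=
  WeakBilin.instContinuousSMul (topDualPairing ℝ X)

lemma wd_add_apply (p q : WeakDual ℝ X) (w : X) : (p + q) w = p w + q w := rfl
lemma wd_smul_apply (l : ℝ) (p : WeakDual ℝ X) (w : X) : (l • p) w = l * p w := rfl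

lemma ereal_smul_le {a r : ℝ} {v : EReal} (ha : 0 ≤ a) (h : v ≤ (r : EReal)) :
    (a : EReal) * v ≤ ((a * r : ℝ) : EReal) := by
  rcases ha.eq_or_lt with rfl | ha'
  · simp
  · induction v using EReal.rec with
    | bot =>
        rw [EReal.coe_mul_bot_of_pos (by exact_mod_cast ha')]
        exact bot_le
    | coe v =>
        rw [← EReal.coe_mul]
        exact EReal.coe_le_coe_iff.2
          (mul_le_mul_of_nonneg_left (EReal.coe_le_coe_iff.1 h) ha)
    | top => exact absurd h (by simp)

lemma ereal_smul_ne_top {a : ℝ} {v : EReal} (ha : 0 ≤ a) (h : v ≠ ⊤) :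
    (a : EReal) * v ≠ ⊤ := by
  rcases ha.eq_or_lt with rfl | ha'
  · simp
  · induction v using EReal.rec with
    | bot =>
        rw [EReal.coe_mul_bot_of_pos (by exact_mod_cast ha')]
        simp
    | coe v => rw [← EReal.coe_mul]; exact EReal.coe_ne_top _
    | top => exact absurd rfl h

def epiSet (g : X → EReal) : Set (X × ℝ) := {w | g w.1 ≤ (w.2 : EReal)}

lemma isClosed_epiSet {g : X → EReal} (hg : LowerSemicontinuous g) :
    IsClosed (epiSet (X := X) g) := by
  rw [← isOpen_compl_iff, isOpen_iff_mem_nhds]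
  rintro ⟨w, r⟩ hw
  simp only [mem_compl_iff, epiSet, mem_setOf_eq, not_le] at hw
  obtain ⟨y, hy1, hy2⟩ := exists_between hw
  have hyt : y ≠ ⊤ := fun h => not_top_lt (h ▸ hy2)
  have hyb : y ≠ ⊥ := fun h => by simp [h] at hy1
  obtain ⟨r', rfl⟩ : ∃ r' : ℝ, y = (r' : EReal) := ⟨y.toReal, (EReal.coe_toReal hyt hyb).symm⟩
  obtain ⟨U, hU, hUo, hwU⟩ := eventually_nhds_iff.mp (hg w _ hy2)
  have hmem : U ×ˢ Iio r' ∈ 𝓝 ((w, r) : X × ℝ) :=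
    prod_mem_nhds (hUo.mem_nhds hwU) (Iio_mem_nhds (by exact_mod_cast hy1))
  refine Filter.mem_of_superset hmem ?_
  rintro ⟨w', s⟩ ⟨hw', hs⟩
  simp only [mem_compl_iff, epiSet, mem_setOf_eq, not_le]
  exact lt_trans (by exact_mod_cast hs) (hU w' hw')

lemma convex_epiSet {g : X → EReal} (hg : EConvexOn' g) :
    Convex ℝ (epiSet (X := X) g) := by
  rintro ⟨w1, r1⟩ h1 ⟨w2, r2⟩ h2 a b ha hb hab
  simp only [epiSet, mem_setOf_eq] at h1 h2 ⊢
  have h3 := hg w1 w2 a b ha hb hab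
  simp only [Prod.smul_mk, Prod.mk_add_mk, smul_eq_mul]
  refine h3.trans ?_
  calc (a : EReal) * g w1 + (b : EReal) * g w2
      ≤ ((a * r1 : ℝ) : EReal) + ((b * r2 : ℝ) : EReal) :=
        add_le_add (ereal_smul_le ha h1) (ereal_smul_le hb h2)
    _ = ((a * r1 + b * r2 : ℝ) : EReal) := by rw [← EReal.coe_add]


/-- Core separation consequence: from a functional separating `(x, a-ε)` from the
epigraph of `g`, produce an element of the ε-subdifferential with an explicit formula. -/
lemma subgrad_core (g : X → EReal) (hg : Gamma0 g) {x : X} {a ε : ℝ}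
    (hga : g x = (a : EReal)) (hε : 0 < ε)
    (Φ : (X × ℝ) →L[ℝ] ℝ) (u : ℝ)
    (hu0 : Φ (x, a - ε) < u)
    (hE : ∀ w : X, ∀ r : ℝ, g w ≤ (r : EReal) → u < Φ (w, r)) :
    0 < Φ ((0 : X), (1 : ℝ)) ∧
    ∃ q : WeakDual ℝ X, q ∈ esubdiff g x ε ∧
      ∀ w : X, q w = -(Φ ((0 : X), (1 : ℝ)))⁻¹ * Φ (w, 0) := by
  set α : ℝ := Φ ((0 : X), (1 : ℝ)) with hαdef
  have hsplit : ∀ (w : X) (r : ℝ), Φ (w, r) = Φ (w, 0) + r * α := by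
    intro w r
    have : ((w, r) : X × ℝ) = (w, 0) + r • ((0 : X), (1 : ℝ)) := by
      rw [Prod.smul_mk, Prod.mk_add_mk, smul_zero, add_zero, smul_eq_mul, mul_one, zero_add]
    rw [this, map_add, map_smul, smul_eq_mul]
  have hxmem : ∀ n : ℕ, u < Φ (x, 0) + (a + n) * α := by
    intro n
    have : g x ≤ ((a + n : ℝ) : EReal) := by
      rw [hga]; exact EReal.coe_le_coe_iff.2 (le_add_of_nonneg_right (Nat.cast_nonneg n))
    have h := hE x (a + n) this
    rwa [hsplit] at h
  have hα0 : 0 ≤ α := by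
    by_contra hneg
    push_neg at hneg
    obtain ⟨n, hn⟩ := exists_nat_gt ((Φ (x, 0) + a * α - u) / (-α))
    have h2 : (Φ (x, 0) + a * α - u) < n * (-α) := by
      have := (div_lt_iff₀ (by linarith : (0:ℝ) < -α)).1 hn
      linarith
    have := hxmem n
    nlinarith
  have hu0' : Φ (x, 0) + (a - ε) * α < u := by rw [← hsplit]; exact hu0
  have hαpos : 0 < α := by
    rcases hα0.eq_or_lt with h0 | h; swap; · exact h
    exfalso
    have h1 := hxmem 0
    rw [← h0] at h1 hu0'
    push_cast at h1
    simp at h1 hu0'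
    linarith
  refine ⟨hαpos, ?_⟩
  set φ : X →L[ℝ] ℝ := Φ.comp (ContinuousLinearMap.inl ℝ X ℝ) with hφdef
  have hφ : ∀ w : X, φ w = Φ (w, 0) := fun w => rfl
  set q0 : X →L[ℝ] ℝ := (-(α⁻¹)) • φ with hq0def
  have hq0 : ∀ w : X, q0 w = -(α⁻¹) * Φ (w, 0) := fun w => rfl
  refine ⟨(q0 : WeakDual ℝ X), ⟨hε.le, by rw [hga]; exact EReal.coe_ne_top _,
    by rw [hga]; exact EReal.coe_ne_bot _, ?_⟩, fun w => hq0 w⟩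
  intro y
  by_cases hy : g y = ⊤
  · rw [hy]; exact le_top
  · have hyb : g y ≠ ⊥ := hg.1 y
    obtain ⟨b, hb⟩ : ∃ b : ℝ, g y = (b : EReal) := ⟨(g y).toReal, (EReal.coe_toReal hy hyb).symm⟩
    have h1 : u < Φ (y, 0) + b * α := by rw [← hsplit]; exact hE y b hb.le
    rw [hga, hb]
    rw [← EReal.coe_add, EReal.coe_le_coe_iff]
    have hq : (q0 : WeakDual ℝ X) y - (q0 : WeakDual ℝ X) x
        = α⁻¹ * (Φ (x, 0) - Φ (y, 0)) := by
      show q0 y - q0 x = _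
      rw [hq0, hq0]; ring
    erw [hq]
    have key : Φ (x, 0) - Φ (y, 0) < (b - a + ε) * α := by nlinarith
    have := (mul_lt_mul_of_pos_left key (inv_pos.2 hαpos))
    rw [mul_comm ((b - a + ε)) α, ← mul_assoc, inv_mul_cancel₀ hαpos.ne', one_mul] at this
    linarith


lemma esubdiff_nonempty (g : X → EReal) (hg : Gamma0 g) {x : X} {a ε : ℝ}
    (hga : g x = (a : EReal)) (hε : 0 < ε) :
    ∃ q : WeakDual ℝ X, q ∈ esubdiff g x ε := by
  have hcl := isClosed_epiSet (X := X) hg.2.2.2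
  have hcv := convex_epiSet (X := X) hg.2.2.1
  have hnotin : ((x, a - ε) : X × ℝ) ∉ epiSet (X := X) g := by
    simp only [epiSet, mem_setOf_eq, hga, not_le]
    exact_mod_cast sub_lt_self a hε
  obtain ⟨Φ, u, hu1, hu2⟩ := geometric_hahn_banach_point_closed hcv hcl hnotin
  obtain ⟨-, q, hq, -⟩ := subgrad_core g hg hga hε Φ u hu1 (fun w r h => hu2 (w, r) h)
  exact ⟨q, hq⟩

lemma subgrad_ray (g : X → EReal) (hg : Gamma0 g) {x : X} {a ε : ℝ}
    (hga : g x = (a : EReal)) (hε : 0 < ε) (z : X) (N : ℝ)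
    (hray : ∀ s : ℝ, 0 < s → g (x + s • z) = ⊤) :
    ∃ q : WeakDual ℝ X, q ∈ esubdiff g x ε ∧ N ≤ q z := by
  have hcl := isClosed_epiSet (X := X) hg.2.2.2
  have hcv := convex_epiSet (X := X) hg.2.2.1
  set P : X × ℝ := (x, a - ε) with hP
  set Q : X × ℝ := (x + z, N + a) with hQ
  set S : Set (X × ℝ) := segment ℝ P Q with hS
  have hSco : Convex ℝ S := convex_segment P Q
  have hScp : IsCompact S := by
    rw [hS, segment_eq_image]
    exact isCompact_Icc.image (by fun_prop)
  have hdisj : Disjoint S (epiSet (X := X) g) := by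
    rw [Set.disjoint_left]
    rintro w hw hwE
    rw [hS, segment_eq_image] at hw
    obtain ⟨θ, hθ, rfl⟩ := hw
    have hfst : ((1 - θ) • P + θ • Q).1 = x + θ • z := by
      simp only [hP, hQ, Prod.smul_mk, Prod.mk_add_mk, smul_add]
      module
    have hsnd : ((1 - θ) • P + θ • Q).2 = (1 - θ) * (a - ε) + θ * (N + a) := rfl
    simp only [epiSet, mem_setOf_eq, hfst, hsnd] at hwE
    rcases eq_or_lt_of_le hθ.1 with h0 | h0
    · rw [← h0] at hwE
      simp only [zero_smul, add_zero, hga] at hwE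
      rw [EReal.coe_le_coe_iff] at hwE
      linarith
    · rw [hray θ h0] at hwE
      exact (EReal.coe_ne_top _) (top_le_iff.1 hwE)
  obtain ⟨Φ, u, v, hu1, huv, hv2⟩ :=
    geometric_hahn_banach_compact_closed hSco hScp hcv hcl hdisj
  have hu0 : Φ (x, a - ε) < u := hu1 P (left_mem_segment ℝ P Q)
  have hE : ∀ w : X, ∀ r : ℝ, g w ≤ (r : EReal) → u < Φ (w, r) :=
    fun w r h => huv.trans (hv2 (w, r) h)
  obtain ⟨hαpos, q, hq, hqf⟩ := subgrad_core g hg hga hε Φ u hu0 hE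
  refine ⟨q, hq, ?_⟩
  set α : ℝ := Φ ((0 : X), (1 : ℝ))
  have hsplit : ∀ (w : X) (r : ℝ), Φ (w, r) = Φ (w, 0) + r * α := by
    intro w r
    have : ((w, r) : X × ℝ) = (w, 0) + r • ((0 : X), (1 : ℝ)) := by
      rw [Prod.smul_mk, Prod.mk_add_mk, smul_zero, add_zero, smul_eq_mul, mul_one, zero_add]
    rw [this, map_add, map_smul, smul_eq_mul]
  have hQu : Φ (x + z, N + a) < u := hu1 Q (right_mem_segment ℝ P Q)
  have hxa : u < Φ (x, 0) + a * α := by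
    have := hE x a (by rw [hga])
    rwa [hsplit] at this
  rw [hsplit] at hQu
  have hadd : Φ (x + z, 0) = Φ (x, 0) + Φ (z, 0) := by
    have : ((x + z, 0) : X × ℝ) = (x, 0) + (z, 0) := by
      rw [Prod.mk_add_mk, add_zero]
    rw [this, map_add]
  rw [hadd] at hQu
  -- from hQu and hxa : Φ (z,0) + (N + a) * α < a * α, so Φ (z,0) < -N * α
  have hz : Φ (z, 0) < -N * α := by nlinarith
  have := hqf z
  rw [this]
  have h2 : α⁻¹ * Φ (z, 0) < α⁻¹ * (-N * α) := mul_lt_mul_of_pos_left hz (inv_pos.2 hαpos)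
  rw [← mul_assoc, mul_comm α⁻¹ (-N), mul_assoc, inv_mul_cancel₀ hαpos.ne', mul_one] at h2
  nlinarith


lemma dual_of_weakdual (Φ : WeakDual ℝ X →L[ℝ] ℝ) :
    ∃ z : X, ∀ q : WeakDual ℝ X, Φ q = q z := by
  have h01 : Φ ⁻¹' (Set.Ioo (-1 : ℝ) 1) ∈ 𝓝 (0 : WeakDual ℝ X) := by
    have := Φ.continuous.continuousAt (x := (0 : WeakDual ℝ X))
    have h0 : Φ 0 = 0 := map_zero Φ
    apply this.preimage_mem_nhds
    rw [h0]
    exact isOpen_Ioo.mem_nhds (by norm_num)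
  obtain ⟨s, hs, hsub⟩ :=
    (LinearMap.hasBasis_weakBilin (topDualPairing ℝ X)).mem_iff.mp h01
  obtain ⟨I, r, hr, rfl⟩ := (SeminormFamily.basisSets_iff _).mp hs
  -- kernel condition
  have hker : ∀ q : WeakDual ℝ X, (∀ y ∈ I, q y = 0) → Φ q = 0 := by
    intro q hq
    by_contra hΦ
    set n : ℝ := 2 / Φ q with hn
    have hmem : n • q ∈ (I.sup (topDualPairing ℝ X).toSeminormFamily).ball 0 r := by
      refine (Seminorm.mem_ball_zero _).2 ?_
      refine Seminorm.finset_sup_apply_lt hr ?_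
      intro y hy
      show ‖n * q y‖ < r
      rw [hq y hy, mul_zero, norm_zero]
      exact hr
    have := hsub hmem
    replace this : -1 < Φ (n • q) ∧ Φ (n • q) < 1 := this
    have hΦsmul : Φ (n • q) = n * Φ q := by rw [map_smul, smul_eq_mul]
    rw [hΦsmul, hn, div_mul_cancel₀ _ hΦ] at this
    linarith [this.2]
  -- linear algebra: Φ ∈ span of evaluations on I
  set L : I → WeakDual ℝ X →ₗ[ℝ] ℝ := fun y => (topDualPairing ℝ X).flip (y : X) with hL
  have hkerle : ⨅ i : I, LinearMap.ker (L i) ≤ LinearMap.ker (Φ : WeakDual ℝ X →ₗ[ℝ] ℝ) := by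
    intro q hq
    rw [Submodule.mem_iInf] at hq
    rw [LinearMap.mem_ker]
    refine hker q fun y hy => ?_
    have := hq ⟨y, hy⟩
    rwa [LinearMap.mem_ker] at this
  have hspan := mem_span_of_iInf_ker_le_ker hkerle
  obtain ⟨c, hc⟩ := (Submodule.mem_span_range_iff_exists_fun ℝ).1 hspan
  refine ⟨∑ i : I, c i • (i : X), fun q => ?_⟩
  have h1 : (Φ : WeakDual ℝ X →ₗ[ℝ] ℝ) q = Φ q := rfl
  rw [← h1, ← hc]
  have h2 : q (∑ i : I, c i • (i : X)) = ∑ i : I, c i • q (i : X) := by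
    show q.toLinearMap (∑ i : I, c i • (i : X)) = _
    rw [map_sum]
    simp [map_smul]
    rfl
  rw [LinearMap.sum_apply]
  show (∑ i : I, (c i • L i) q) = _
  rw [h2]
  rfl


lemma usc_top_attained {T : Type*} [TopologicalSpace T] [CompactSpace T] [Nonempty T]
    (g : T → EReal) (hg : UpperSemicontinuous g) (h : (⨆ t, g t) = ⊤) :
    ∃ t, g t = ⊤ := by
  set A : ℕ → Set T := fun n => {t | ((n : ℝ) : EReal) ≤ g t} with hA
  have hclosed : ∀ n, IsClosed (A n) := by
    intro n
    have : A n = {t | g t < ((n : ℝ) : EReal)}ᶜ := by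
      ext t; simp [hA, not_lt]
    rw [this]
    exact (hg.isOpen_preimage _).isClosed_compl
  have hne : ∀ n, (A n).Nonempty := by
    intro n
    have : ((n : ℝ) : EReal) < ⨆ t, g t := by rw [h]; exact lt_top_iff_ne_top.2 (EReal.coe_ne_top _)
    obtain ⟨t, ht⟩ := lt_iSup_iff.mp this
    exact ⟨t, ht.le⟩
  have hdec : ∀ n, A (n + 1) ⊆ A n := by
    intro n t ht
    refine le_trans (EReal.coe_le_coe_iff.2 ?_) ht
    exact_mod_cast Nat.le_succ n
  obtain ⟨t, ht⟩ := IsCompact.nonempty_iInter_of_sequence_nonempty_isCompact_isClosed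
    A hdec hne ((hclosed 0).isCompact) hclosed
  refine ⟨t, (EReal.eq_top_iff_forall_lt _).2 fun y => ?_⟩
  obtain ⟨n, hn⟩ := exists_nat_gt y
  have h1 : t ∈ A n := mem_iInter.mp ht n
  exact lt_of_lt_of_le (by exact_mod_cast hn) h1

lemma ray_top {T : Type*} [TopologicalSpace T] [CompactSpace T] [Nonempty T]
    (f : T → X → EReal) (hf : ∀ t, Gamma0 (f t))
    (husc : ∀ z : X, UpperSemicontinuous fun t => f t z)
    (x z : X) (hfx : ∀ t, f t x ≠ ⊤)
    (h : ∀ η : ℝ, 0 < η → ∃ t, f t (x + η • z) = ⊤) :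
    ∃ t, ∀ η : ℝ, 0 < η → f t (x + η • z) = ⊤ := by
  set K : ℝ → Set T := fun η => {t | f t (x + η • z) = ⊤} with hK
  have hmono : ∀ η η' : ℝ, 0 < η → η ≤ η' → K η ⊆ K η' := by
    intro η η' hη hηη' t ht
    by_contra htop
    simp only [hK, mem_setOf_eq] at ht htop
    have hη' : 0 < η' := lt_of_lt_of_le hη hηη'
    set a : ℝ := η / η' with ha
    have ha0 : 0 ≤ a := le_of_lt (div_pos hη hη')
    have ha1 : a ≤ 1 := (div_le_one hη').2 hηη'
    have hcomb : (1 - a) • x + a • (x + η' • z) = x + η • z := by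
      rw [smul_add, smul_smul, ha, div_mul_cancel₀ _ hη'.ne']
      module
    have := (hf t).2.2.1 x (x + η' • z) (1 - a) a (by linarith) ha0 (by ring)
    rw [hcomb, ht] at this
    have hne : ((1 - a : ℝ) : EReal) * f t x + (a : EReal) * f t (x + η' • z) ≠ ⊤ :=
      (EReal.add_lt_top (ereal_smul_ne_top (by linarith) (hfx t))
        (ereal_smul_ne_top ha0 htop)).ne
    exact hne (top_le_iff.1 this)
  have hclosed : ∀ η : ℝ, IsClosed (K η) := by
    intro η
    have : K η = {t | f t (x + η • z) < ⊤}ᶜ := by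
      ext t; simp [hK, lt_top_iff_ne_top]
    rw [this]
    exact ((husc (x + η • z)).isOpen_preimage ⊤).isClosed_compl
  set B : ℕ → Set T := fun n => K (1 / (n + 1)) with hB
  have hposn : ∀ n : ℕ, (0:ℝ) < 1 / (n + 1) := fun n => by positivity
  have hdec : ∀ n, B (n + 1) ⊆ B n := by
    intro n
    refine hmono _ _ (hposn (n + 1)) ?_
    have h1 : ((n:ℝ) + 1) ≤ ((n + 1 : ℕ) : ℝ) + 1 := by push_cast; linarith
    exact one_div_le_one_div_of_le (by positivity) h1
  have hne : ∀ n, (B n).Nonempty := fun n => h _ (hposn n)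
  obtain ⟨t, ht⟩ := IsCompact.nonempty_iInter_of_sequence_nonempty_isCompact_isClosed
    B hdec hne ((hclosed _).isCompact) (fun n => hclosed _)
  refine ⟨t, fun η hη => ?_⟩
  obtain ⟨n, hn⟩ := exists_nat_gt (1 / η)
  have hle : 1 / ((n : ℝ) + 1) ≤ η := by
    rw [div_le_iff₀ (by positivity)]
    rw [div_lt_iff₀ hη] at hn
    nlinarith
  exact hmono _ _ (hposn n) hle (mem_iInter.mp ht n)

end S9


/-- Corollary `ccor`: under (SH), if `inf_t f_t(x) > −∞` then for every
`ε > 0`, `N_{dom f}(x) = [co‾(⋃_t ∂_ε f_t(x))]_∞`. -/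
theorem statement9 {T : Type*} [TopologicalSpace T] [CompactSpace T] [T2Space T] [Nonempty T]
    (f : T → X → EReal) (hf : ∀ t, Gamma0 (f t))
    (husc : ∀ z : X, UpperSemicontinuous fun t => f t z)
    (x : X) (hx : x ∈ edom (fun z => ⨆ t, f t z))
    (hinf : (⊥ : EReal) < ⨅ t, f t x)
    (ε : ℝ) (hε : 0 < ε) :
    normalCone (edom (fun z => ⨆ t, f t z)) x =
      recCone (cclo (⋃ t, esubdiff (f t) x ε)) := by
  classical
  unfold cclo
  set F : X → EReal := fun z => ⨆ t, f t z with hF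
  set C : Set (WeakDual ℝ X) := closure (convexHull ℝ (⋃ t, esubdiff (f t) x ε)) with hC
  have t0 : T := Classical.arbitrary T
  have hxF : F x ≠ ⊤ := hx
  have hFbot : ∀ w, F w ≠ ⊥ := by
    intro w hw
    have h1 : f t0 w ≤ F w := le_iSup (fun t => f t w) t0
    rw [hw] at h1
    exact (hf t0).1 w (le_bot_iff.1 h1)
  have hftop : ∀ t, f t x ≠ ⊤ := by
    intro t h
    exact hxF (top_le_iff.1 (h ▸ le_iSup (fun t => f t x) t))
  have hev : ∀ y : X, Continuous fun q : WeakDual ℝ X => q y :=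
    fun y => WeakBilin.eval_continuous (topDualPairing ℝ X) y
  have hCclosed : IsClosed C := isClosed_closure
  have hCconv : Convex ℝ C := (convex_convexHull ℝ _).closure
  have hsubC : ∀ t, esubdiff (f t) x ε ⊆ C := fun t =>
    (subset_iUnion (fun t => esubdiff (f t) x ε) t).trans
      ((subset_convexHull ℝ _).trans subset_closure)
  ext p
  constructor
  · -- normal cone ⊆ recession cone
    rintro ⟨hxA, hp2⟩
    have hga0 : f t0 x = (((f t0 x).toReal : ℝ) : EReal) :=
      (EReal.coe_toReal (hftop t0) ((hf t0).1 x)).symm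
    obtain ⟨q0, hq0⟩ := S9.esubdiff_nonempty (f t0) (hf t0) hga0 hε
    have hq0C : q0 ∈ C := hsubC t0 hq0
    have hstar : ∀ c ∈ C, ∀ l : ℝ, 0 ≤ l → c + l • p ∈ C := by
      intro c hc l hl
      by_contra hq0n
      obtain ⟨Φ, u, hu1, hu2⟩ := geometric_hahn_banach_closed_point hCconv hCclosed hq0n
      obtain ⟨z, hz⟩ := S9.dual_of_weakdual Φ
      have hcz : c z < u := hz c ▸ hu1 c hc
      have hq0z : u < c z + l * p z := by
        have h2 := hu2
        rw [hz, S9.wd_add_apply, S9.wd_smul_apply] at h2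
        exact h2
      have hpz : 0 < p z := by
        by_contra hle
        push_neg at hle
        nlinarith [mul_nonpos_of_nonneg_of_nonpos hl hle]
      have hdom : ∃ η : ℝ, 0 < η ∧ F (x + η • z) ≠ ⊤ := by
        by_contra hcon
        push_neg at hcon
        have hstep : ∀ η : ℝ, 0 < η → ∃ t, f t (x + η • z) = ⊤ := fun η hη =>
          S9.usc_top_attained _ (husc (x + η • z)) (hcon η hη)
        obtain ⟨tb, htb⟩ := S9.ray_top f hf husc x z hftop hstep
        have hgab : f tb x = (((f tb x).toReal : ℝ) : EReal) :=
          (EReal.coe_toReal (hftop tb) ((hf tb).1 x)).symm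
        obtain ⟨q, hqmem, hqz⟩ := S9.subgrad_ray (f tb) (hf tb) hgab hε z u htb
        have hqu : Φ q < u := hu1 q (hsubC tb hqmem)
        rw [hz] at hqu
        linarith
      obtain ⟨η, hη, hmem⟩ := hdom
      have h3 : p (x + η • z) - p x ≤ 0 := hp2 (x + η • z) hmem
      have hlin : p (x + η • z) = p x + η * p z := by
        rw [map_add, map_smul, smul_eq_mul]
      rw [hlin] at h3
      nlinarith
    exact ⟨q0, hq0C, fun l hl => hstar q0 hq0C l hl⟩
  · -- recession cone ⊆ normal cone
    rintro ⟨c, hc, hcl⟩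
    have hiInf_ne_top : (⨅ t, f t x) ≠ ⊤ := by
      intro h
      exact hftop t0 (top_le_iff.1 (h ▸ iInf_le (fun t => f t x) t0))
    set m' : ℝ := (⨅ t, f t x).toReal with hm'def
    have hm' : ∀ t, (m' : EReal) ≤ f t x := by
      intro t
      rw [hm'def, EReal.coe_toReal hiInf_ne_top hinf.ne']
      exact iInf_le (fun t => f t x) t
    set S : Set (WeakDual ℝ X) :=
      {q | ∀ y : X, F y ≠ ⊤ → q y - q x ≤ (F y).toReal - m' + ε} with hSdef
    have hSclosed : IsClosed S := by
      have hrw : S = ⋂ (y : X) (_ : F y ≠ ⊤),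
          {q : WeakDual ℝ X | q y - q x ≤ (F y).toReal - m' + ε} := by
        ext q
        simp only [hSdef, mem_setOf_eq, mem_iInter]
      rw [hrw]
      exact isClosed_iInter fun y => isClosed_iInter fun hy =>
        isClosed_le ((hev y).sub (hev x)) continuous_const
    have hSconv : Convex ℝ S := by
      intro q1 hq1 q2 hq2 a b ha hb hab
      intro y hy
      have e1 := hq1 y hy
      have e2 := hq2 y hy
      have hrw : (a • q1 + b • q2) y - (a • q1 + b • q2) x
          = a * (q1 y) + b * (q2 y) - (a * (q1 x) + b * (q2 x)) := by
        rw [S9.wd_add_apply, S9.wd_smul_apply, S9.wd_smul_apply,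
          S9.wd_add_apply, S9.wd_smul_apply, S9.wd_smul_apply]
      rw [hrw]
      have h1' := mul_le_mul_of_nonneg_left e1 ha
      have h2' := mul_le_mul_of_nonneg_left e2 hb
      have hbk : b * ((F y).toReal - m' + ε) = (1 - a) * ((F y).toReal - m' + ε) := by
        rw [show b = 1 - a from by linarith]
      nlinarith [h1', h2', hbk]
    have hsub : (⋃ t, esubdiff (f t) x ε) ⊆ S := by
      rintro q hq
      rw [mem_iUnion] at hq
      obtain ⟨t, hε0, hta, htb, h4⟩ := hq
      intro y hy
      have h6 : (m' : EReal) + ((q y - q x - ε : ℝ) : EReal) ≤ f t y :=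
        le_trans (add_le_add_left (hm' t) _) (h4 y)
      have h7 : (m' : EReal) + ((q y - q x - ε : ℝ) : EReal) ≤ F y :=
        h6.trans (le_iSup (fun t => f t y) t)
      rw [← EReal.coe_add] at h7
      have h8 : F y = (((F y).toReal : ℝ) : EReal) := (EReal.coe_toReal hy (hFbot y)).symm
      rw [h8, EReal.coe_le_coe_iff] at h7
      linarith
    have hCS : C ⊆ S := closure_minimal (convexHull_min hsub hSconv) hSclosed
    refine ⟨hx, fun y hy => ?_⟩
    by_contra hpy
    push_neg at hpy
    have h1 : c y - c x ≤ (F y).toReal - m' + ε := hCS hc y hy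
    set l : ℝ := (((F y).toReal - m' + ε) - (c y - c x)) / (p y - p x) + 1 with hldef
    have hl0 : 0 ≤ l := by
      rw [hldef]
      have hq : 0 ≤ (((F y).toReal - m' + ε) - (c y - c x)) / (p y - p x) :=
        div_nonneg (by linarith) (by linarith)
      linarith
    have h2 := hCS (hcl l hl0) y hy
    rw [S9.wd_add_apply, S9.wd_smul_apply, S9.wd_add_apply, S9.wd_smul_apply] at h2
    have hml : l * (p y - p x) = (((F y).toReal - m' + ε) - (c y - c x)) + (p y - p x) := by
      rw [hldef]
      field_simp
    have hexp : c y + l * p y - (c x + l * p x) = (c y - c x) + l * (p y - p x) := by ring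
    linarith [hml, h2, hexp.symm.trans_le h2]
end
end

section
/- Let {f_t : t ∈ T} ⊂ Γ₀(X) be a nonempty family, f := sup_{t∈T} f_t, and x ∈ dom f. Assume the standard hypothesis (SH) holds and that the mapping t ↦ f_t(x) is additionally lower semicontinuous on T. Then inf_{t∈T} f_t(x) > −∞, and consequently N_{dom f}(x) = [ co‾( ⋃_{t∈T} ∂_ε f_t(x) ) ]_∞ for every ε > 0. -/
open Set Pointwise Topology
open scoped Classical

noncomputable section

set_option linter.unusedSectionVars false
set_option linter.unusedVariables false
set_option maxHeartbeats 1000000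

variable {X : Type*} [AddCommGroup X] [Module ℝ X] [TopologicalSpace X]
  [IsTopologicalAddGroup X] [ContinuousSMul ℝ X] [LocallyConvexSpace ℝ X] [T2Space X]

/-! ### Auxiliary lemmas -/

/-- The epigraph of an extended-real valued function. -/
def ST10epi (f : X → EReal) : Set (X × ℝ) := {q | f q.1 ≤ (q.2 : EReal)}

lemma ST10epi_closed {f : X → EReal} (hl : LowerSemicontinuous f) : IsClosed (ST10epi f) := by
  rw [← isOpen_compl_iff, isOpen_iff_mem_nhds]
  rintro ⟨z, r⟩ hq
  simp only [mem_compl_iff, ST10epi, mem_setOf_eq, not_le] at hq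
  obtain ⟨c, hrc, hcf⟩ := EReal.exists_between_coe_real hq
  have h1 : ∀ᶠ w in 𝓝 z, (c : EReal) < f w := hl z _ hcf
  have h2 : ∀ᶠ s in 𝓝 r, s < c := Iio_mem_nhds (by exact_mod_cast hrc)
  rw [nhds_prod_eq]
  filter_upwards [h1.prod_mk h2] with q hq2
  simp only [mem_compl_iff, ST10epi, mem_setOf_eq, not_le]
  exact lt_trans (by exact_mod_cast hq2.2) hq2.1

lemma ST10epi_convex {f : X → EReal} (hb : ∀ x, f x ≠ ⊥) (hc : EConvexOn' f) :
    Convex ℝ (ST10epi f) := by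
  rintro ⟨z1, r1⟩ h1 ⟨z2, r2⟩ h2 a b ha hb' hab
  simp only [ST10epi, mem_setOf_eq] at h1 h2 ⊢
  have hz1 : f z1 ≠ ⊤ := fun h => by simp [h] at h1
  have hz2 : f z2 ≠ ⊤ := fun h => by simp [h] at h2
  have e1 : f z1 = ((f z1).toReal : EReal) := (EReal.coe_toReal hz1 (hb z1)).symm
  have e2 : f z2 = ((f z2).toReal : EReal) := (EReal.coe_toReal hz2 (hb z2)).symm
  have h1' : (f z1).toReal ≤ r1 := EReal.toReal_le_toReal h1 (hb z1) (by simp) |>.trans (by simp)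
  have h2' : (f z2).toReal ≤ r2 := EReal.toReal_le_toReal h2 (hb z2) (by simp) |>.trans (by simp)
  calc f (a • z1 + b • z2) ≤ (a : EReal) * f z1 + (b : EReal) * f z2 := hc z1 z2 a b ha hb' hab
    _ = ((a * (f z1).toReal + b * (f z2).toReal : ℝ) : EReal) := by
        rw [e1, e2]; push_cast; rfl
    _ ≤ (((a • (z1, r1) + b • (z2, r2) : X × ℝ).2 : ℝ) : EReal) := by
        have : (a • (z1, r1) + b • (z2, r2) : X × ℝ).2 = a * r1 + b * r2 := rfl
        rw [this]
        exact_mod_cast add_le_add (mul_le_mul_of_nonneg_left h1' ha)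
          (mul_le_mul_of_nonneg_left h2' hb')

/-- Main separation lemma: produces `ε`-subgradients, with a lower bound on the value at a
direction `y` along which the function is identically `+∞` (for `β` large), or plain
nonemptiness (for `y = 0`, `β = 0`). -/
lemma ST10sep (f : X → EReal) (hf : Gamma0 f) {x : X} (hxt : f x ≠ ⊤) {ε : ℝ} (hε : 0 < ε)
    (y : X) (β : ℝ)
    (hout : ∀ θ : ℝ, 0 ≤ θ → θ ≤ 1 →
      (((f x).toReal - ε + θ * β : ℝ) : EReal) < f (x + θ • y)) :
    ∃ r ∈ esubdiff f x ε, β - ε < r y := by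
  obtain ⟨hbot, _, hconv, hlsc⟩ := hf
  set fx := (f x).toReal with hfxdef
  have hfx : f x = (fx : EReal) := (EReal.coe_toReal hxt (hbot x)).symm
  set A : X × ℝ := (x, fx - ε) with hA
  set B : X × ℝ := (x + y, fx - ε + β) with hB
  have hseg_compact : IsCompact (segment ℝ A B) := by
    rw [segment_eq_image]
    exact (isCompact_Icc).image
      (((continuous_const.sub continuous_id).smul continuous_const).add
        (continuous_id.smul continuous_const))
  have hseg_convex : Convex ℝ (segment ℝ A B) := convex_segment A B
  have hdisj : Disjoint (segment ℝ A B) (ST10epi f) := by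
    rw [Set.disjoint_left]
    intro q hq
    rw [segment_eq_image] at hq
    obtain ⟨θ, hθ, rfl⟩ := hq
    simp only [ST10epi, mem_setOf_eq, not_le]
    have h1 : ((1 - θ) • A + θ • B).1 = x + θ • y := by
      simp [hA, hB, Prod.smul_mk, smul_add, sub_smul, one_smul]
      abel
    have h2 : ((1 - θ) • A + θ • B).2 = fx - ε + θ * β := by
      simp [hA, hB]
      ring
    rw [h1, h2]
    exact hout θ hθ.1 hθ.2
  obtain ⟨g, u, v, hgu, huv, hgv⟩ :=
    geometric_hahn_banach_compact_closed hseg_convex hseg_compact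
      (ST10epi_convex hbot hconv) (ST10epi_closed hlsc) hdisj
  set p : X →L[ℝ] ℝ := g.comp (ContinuousLinearMap.inl ℝ X ℝ) with hp
  set c : ℝ := g (0, 1) with hc
  have hdecomp : ∀ z : X, ∀ ρ : ℝ, g (z, ρ) = p z + c * ρ := by
    intro z ρ
    have : (z, ρ) = (z, (0:ℝ)) + ρ • ((0:X), (1:ℝ)) := by
      simp [Prod.ext_iff]
    rw [this, map_add, map_smul]
    simp [hp, hc, ContinuousLinearMap.inl_apply, mul_comm]
  have hepi : ∀ z : X, ∀ ρ : ℝ, f z ≤ (ρ : EReal) → v < p z + c * ρ := by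
    intro z ρ hz
    have := hgv (z, ρ) hz
    rwa [hdecomp] at this
  have hxfx : v < p x + c * fx := hepi x fx (le_of_eq hfx)
  have hAm : A ∈ segment ℝ A B := left_mem_segment ℝ A B
  have hBm : B ∈ segment ℝ A B := right_mem_segment ℝ A B
  have hgA : p x + c * (fx - ε) < u := by have := hgu A hAm; rwa [hdecomp] at this
  have hgB : p (x + y) + c * (fx - ε + β) < u := by have := hgu B hBm; rwa [hdecomp] at this
  have hc0 : 0 ≤ c := by
    by_contra hcneg
    push_neg at hcneg
    set ρ := max fx ((v - p x - 1) / c) with hρ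
    have h1 : f x ≤ (ρ : EReal) := hfx.le.trans (by exact_mod_cast le_max_left _ _)
    have h2 : v < p x + c * ρ := hepi x ρ h1
    have h3 : c * ρ ≤ c * ((v - p x - 1) / c) :=
      mul_le_mul_of_nonpos_left (le_max_right _ _) hcneg.le
    rw [mul_div_cancel₀ _ hcneg.ne] at h3
    linarith
  have hcpos : 0 < c := by
    rcases hc0.lt_or_eq with h | h
    · exact h
    · exfalso
      rw [← h] at hgA hxfx
      simp only [zero_mul, add_zero] at hgA hxfx
      linarith
  set r : WeakDual ℝ X := ((-c⁻¹) • p : X →L[ℝ] ℝ) with hr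
  have hrapp : ∀ z : X, r z = -c⁻¹ * p z := fun z => rfl
  refine ⟨r, ⟨hε.le, hxt, hbot x, ?_⟩, ?_⟩
  · intro z
    rcases eq_or_ne (f z) ⊤ with hz | hz
    · rw [hz]; exact le_top
    have hzb : f z = ((f z).toReal : EReal) := (EReal.coe_toReal hz (hbot z)).symm
    set fz := (f z).toReal
    have h2 : v < p z + c * fz := hepi z fz (le_of_eq hzb)
    rw [hfx, hzb, hrapp, hrapp, ← EReal.coe_add, EReal.coe_le_coe_iff]
    have key : p x + c * (fx - ε) < p z + c * fz := by linarith
    have goal' : fx - ε - fz ≤ (p z - p x) / c := by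
      rw [le_div_iff₀ hcpos]
      nlinarith [key]
    have hrw : -c⁻¹ * p z - -c⁻¹ * p x = -((p z - p x) / c) := by
      field_simp
      ring
    linarith [goal']
  · rw [hrapp]
    have hpxy : p (x + y) = p x + p y := map_add p x y
    have key : p y + c * β - c * ε < 0 := by
      rw [hpxy] at hgB
      linarith
    have h2 : β - ε < (-(p y)) / c := by
      rw [lt_div_iff₀ hcpos]
      nlinarith [key]
    have h3 : -c⁻¹ * p y = (-(p y)) / c := by
      field_simp
    linarith

instance ST10lcs : LocallyConvexSpace ℝ (WeakDual ℝ X) :=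
  WeakBilin.locallyConvexSpace (B := topDualPairing ℝ X)

/-- evaluation as a linear map on the weak dual -/
def ST10evalL (y : X) : WeakDual ℝ X →ₗ[ℝ] ℝ where
  toFun p := p y
  map_add' p q := rfl
  map_smul' c p := rfl

/-- Every continuous linear functional on the weak-* dual is an evaluation. -/
lemma ST10weakdual_dual_eval (φ : WeakDual ℝ X →L[ℝ] ℝ) :
    ∃ y : X, ∀ p : WeakDual ℝ X, φ p = p y := by
  have hinj : Function.Injective (topDualPairing ℝ X) := by
    intro a b hab
    apply ContinuousLinearMap.ext
    intro z
    have := congrArg (fun (l : X →ₗ[ℝ] ℝ) => l z) hab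
    simpa using this
  have hind : IsInducing (fun (p : WeakDual ℝ X) (x : X) => p x) :=
    (WeakBilin.isEmbedding hinj).toIsInducing
  have hcont : ContinuousAt φ 0 := φ.continuous.continuousAt
  have hnhds : φ ⁻¹' (Set.Ioo (-1 : ℝ) 1) ∈ 𝓝 (0 : WeakDual ℝ X) := by
    apply hcont.preimage_mem_nhds
    rw [map_zero]
    exact isOpen_Ioo.mem_nhds (by norm_num)
  rw [hind.nhds_eq_comap, Filter.mem_comap] at hnhds
  obtain ⟨s, hs, hsub⟩ := hnhds
  rw [nhds_pi, Filter.mem_pi] at hs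
  obtain ⟨I, hIfin, tt, htt, hpi⟩ := hs
  haveI : Finite ↥I := hIfin.to_subtype
  have hker : ⨅ (i : ↥I), LinearMap.ker (ST10evalL (X := X) i.1) ≤
      LinearMap.ker (φ : WeakDual ℝ X →ₗ[ℝ] ℝ) := by
    intro p hp
    simp only [Submodule.mem_iInf, LinearMap.mem_ker] at hp ⊢
    have hz : ∀ c : ℝ, c • p ∈ φ ⁻¹' (Set.Ioo (-1 : ℝ) 1) := by
      intro c
      apply hsub
      apply hpi
      intro i hi
      have hpi0 : p i = 0 := hp ⟨i, hi⟩
      show ((c • p) : WeakDual ℝ X) i ∈ tt i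
      have hcp : ((c • p) : WeakDual ℝ X) i = c * p i := rfl
      rw [hcp, hpi0, mul_zero]
      exact mem_of_mem_nhds (htt i)
    show φ p = 0
    by_contra hne
    have h1 := hz (2 / φ p)
    simp only [Set.mem_preimage, map_smul, smul_eq_mul, Set.mem_Ioo] at h1
    rw [div_mul_cancel₀ (2 : ℝ) hne] at h1
    linarith [h1.2]
  have hspan := mem_span_of_iInf_ker_le_ker hker
  haveI := hIfin.fintype
  rw [Submodule.mem_span_range_iff_exists_fun] at hspan
  obtain ⟨cc, hcc⟩ := hspan
  refine ⟨∑ i : ↥I, cc i • (i : X), ?_⟩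
  intro p
  have h1 := congrArg (fun l : WeakDual ℝ X →ₗ[ℝ] ℝ => l p) hcc
  simp only [LinearMap.coe_sum, Finset.sum_apply, LinearMap.smul_apply, smul_eq_mul] at h1
  have h2 : p (∑ i : ↥I, cc i • (i : X)) = ∑ i : ↥I, cc i * p i := by
    rw [map_sum]
    refine Finset.sum_congr rfl fun i _ => ?_
    rw [map_smul]
    rfl
  rw [h2]
  exact h1.symm

/-- under (SH), if additionally `t ↦ f_t(x)` is lsc on `T`, then
`inf_t f_t(x) > −∞` and consequently the normal cone formula holds for every `ε > 0`. -/
theorem statement10 {T : Type*} [TopologicalSpace T] [CompactSpace T] [T2Space T] [Nonempty T]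
    (f : T → X → EReal) (hf : ∀ t, Gamma0 (f t))
    (husc : ∀ z : X, UpperSemicontinuous fun t => f t z)
    (x : X) (hx : x ∈ edom (fun z => ⨆ t, f t z))
    (hlsc : LowerSemicontinuous fun t => f t x) :
    ((⊥ : EReal) < ⨅ t, f t x) ∧
    (∀ ε : ℝ, 0 < ε →
      normalCone (edom (fun z => ⨆ t, f t z)) x =
        recCone (cclo (⋃ t, esubdiff (f t) x ε))) := by
  have hx' : (⨆ t, f t x) ≠ ⊤ := hx
  have hbot : ∀ t z, f t z ≠ ⊥ := fun t z => (hf t).1 z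
  have hle : ∀ t z, f t z ≤ ⨆ t', f t' z := fun t z => le_iSup (fun t' => f t' z) t
  have hftx_top : ∀ t, f t x ≠ ⊤ := fun t => ne_top_of_le_ne_top hx' (hle t x)
  -- lower bound on t ↦ f t x, via compactness and lsc
  have hlb : ∃ m : ℝ, ∀ t, (m : EReal) ≤ f t x := by
    by_contra hm
    push_neg at hm
    set K : ℕ → Set T := fun n => {t | f t x ≤ ((-(n : ℝ) : ℝ) : EReal)} with hK
    have hKcl : ∀ n, IsClosed (K n) := by
      intro n
      rw [← isOpen_compl_iff, isOpen_iff_mem_nhds]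
      intro t ht
      simp only [mem_compl_iff, hK, mem_setOf_eq, not_le] at ht
      filter_upwards [hlsc t _ ht] with t' ht'
      simp only [mem_compl_iff, hK, mem_setOf_eq, not_le]
      exact ht'
    have hKne : ∀ n, (K n).Nonempty := by
      intro n
      obtain ⟨t, ht⟩ := hm (-(n : ℝ))
      exact ⟨t, ht.le⟩
    have hKdir : Directed (· ⊇ ·) K := by
      intro a b
      refine ⟨max a b, fun t ht => ?_, fun t ht => ?_⟩ <;>
      · simp only [hK, mem_setOf_eq] at ht ⊢
        refine ht.trans ?_
        rw [EReal.coe_le_coe_iff]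
        simp [Nat.cast_max]
        try exact le_max_left _ _
        try exact le_max_right _ _
    obtain ⟨t0, ht0⟩ := IsCompact.nonempty_iInter_of_directed_nonempty_isCompact_isClosed
      K hKdir hKne (fun n => (hKcl n).isCompact) hKcl
    simp only [mem_iInter, hK, mem_setOf_eq] at ht0
    have hreal : f t0 x = ((f t0 x).toReal : EReal) :=
      (EReal.coe_toReal (hftx_top t0) (hbot t0 x)).symm
    obtain ⟨n, hn⟩ := exists_nat_gt (-(f t0 x).toReal)
    have := ht0 n
    rw [hreal, EReal.coe_le_coe_iff] at this
    linarith
  obtain ⟨m, hm⟩ := hlb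
  have part1 : (⊥ : EReal) < ⨅ t, f t x :=
    lt_of_lt_of_le (EReal.bot_lt_coe m) (le_iInf fun t => hm t)
  refine ⟨part1, ?_⟩
  intro ε hε
  set S : Set (WeakDual ℝ X) := ⋃ t, esubdiff (f t) x ε with hS
  have hCconv : Convex ℝ (closure (convexHull ℝ S)) := (convex_convexHull ℝ S).closure
  have hCcl : IsClosed (closure (convexHull ℝ S)) := isClosed_closure
  have hSC : S ⊆ closure (convexHull ℝ S) :=
    subset_trans (subset_convexHull ℝ S) subset_closure
  apply Set.Subset.antisymm
  · -- normal cone ⊆ recession cone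
    rintro p ⟨hxA, hpn⟩
    -- nonemptiness of the t₀-subdifferential
    set t₀ : T := Classical.arbitrary T with ht₀
    obtain ⟨c₀, hc₀, -⟩ := ST10sep (f t₀) (hf t₀) (hftx_top t₀) hε 0 0 (by
      intro θ h0 h1
      have hxx : x + θ • (0 : X) = x := by simp
      have h2 : (((f t₀ x).toReal - ε + θ * 0 : ℝ) : EReal)
          < (((f t₀ x).toReal : ℝ) : EReal) := by
        rw [EReal.coe_lt_coe_iff]; linarith
      rw [hxx]
      exact h2.trans_le (EReal.coe_toReal (hftx_top t₀) (hbot t₀ x)).le)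
    have hc₀C : c₀ ∈ closure (convexHull ℝ S) := hSC (mem_iUnion.2 ⟨t₀, hc₀⟩)
    refine ⟨c₀, hc₀C, ?_⟩
    intro l hl
    by_contra hnot
    obtain ⟨φ, u, hyu, hu⟩ := geometric_hahn_banach_closed_point hCconv hCcl hnot
    obtain ⟨y, hφ⟩ := ST10weakdual_dual_eval φ
    have hc₀y : c₀ y < u := by rw [← hφ]; exact hyu c₀ hc₀C
    have happ : φ (c₀ + l • p) = c₀ y + l * p y := by rw [hφ]; rfl
    have hpy : 0 < p y := by
      rw [happ] at hu
      rcases le_or_gt (p y) 0 with h | h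
      · nlinarith [mul_nonpos_of_nonneg_of_nonpos hl h]
      · exact h
    -- for every t there is a feasible step along y
    have hst : ∀ t, ∃ s : ℝ, 0 < s ∧ f t (x + s • y) ≠ ⊤ := by
      intro t
      by_contra h
      push_neg at h
      obtain ⟨r, hrsub, hry⟩ := ST10sep (f t) (hf t) (hftx_top t) hε y (u + ε) (by
        intro θ h0 h1
        rcases h0.lt_or_eq with h0' | h0'
        · rw [h (θ) h0']
          exact EReal.coe_lt_top _
        · have h2 : (((f t x).toReal - ε + 0 * (u + ε) : ℝ) : EReal)
              < (((f t x).toReal : ℝ) : EReal) := by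
            rw [EReal.coe_lt_coe_iff]; linarith
          rw [← h0', zero_smul, add_zero]
          exact h2.trans_le (EReal.coe_toReal (hftx_top t) (hbot t x)).le)
      have : r y < u := by rw [← hφ]; exact hyu r (hSC (mem_iUnion.2 ⟨t, hrsub⟩))
      linarith
    choose s hspos hsne using hst
    set M : T → ℝ := fun t => (f t (x + s t • y)).toReal + 1 with hM
    have hMt : ∀ t, f t (x + s t • y) < ((M t : ℝ) : EReal) := by
      intro t
      rw [(EReal.coe_toReal (hsne t) (hbot t _)).symm, EReal.coe_lt_coe_iff, hM]
      simp
    set U : T → Set T := fun t => {t' | f t' (x + s t • y) < ((M t : ℝ) : EReal)} with hU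
    have hUopen : ∀ t, IsOpen (U t) := by
      intro t
      rw [isOpen_iff_mem_nhds]
      intro t' ht'
      exact husc (x + s t • y) t' _ ht'
    have hcover : (univ : Set T) ⊆ ⋃ t, U t := fun t _ => mem_iUnion.2 ⟨t, hMt t⟩
    obtain ⟨Fs, hFs⟩ := isCompact_univ.elim_finite_subcover U hUopen hcover
    have hFne : Fs.Nonempty := by
      obtain ⟨t, ht⟩ := mem_iUnion₂.1 (hFs (mem_univ t₀))
      exact ⟨t, ht.1⟩
    set s₀ : ℝ := Fs.inf' hFne s with hs₀
    have hs₀pos : 0 < s₀ := (Finset.lt_inf'_iff hFne).2 fun t _ => hspos t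
    set Fx : ℝ := (⨆ t, f t x).toReal with hFx
    have hFxb : (⨆ t, f t x) ≠ ⊥ :=
      fun hb => (hbot t₀ x) (eq_bot_iff.2 (hb ▸ hle t₀ x))
    have hFxr : (⨆ t, f t x) = ((Fx : ℝ) : EReal) := (EReal.coe_toReal hx' hFxb).symm
    set Bv : ℝ := max Fx (Fs.sup' hFne M) with hBv
    have hbound : ∀ t', f t' (x + s₀ • y) ≤ ((Bv : ℝ) : EReal) := by
      intro t'
      obtain ⟨t, htF, ht'⟩ := mem_iUnion₂.1 (hFs (mem_univ t'))
      have hstpos := hspos t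
      set lam : ℝ := s₀ / s t with hlam
      have hlam0 : 0 ≤ lam := div_nonneg hs₀pos.le hstpos.le
      have hlam1 : lam ≤ 1 := by
        rw [div_le_one hstpos]
        exact Finset.inf'_le s htF
      have hcomb : (1 - lam) • x + lam • (x + s t • y) = x + s₀ • y := by
        rw [smul_add, smul_smul, hlam, div_mul_cancel₀ _ hstpos.ne']
        rw [← add_assoc, ← add_smul]
        norm_num
      have hconv := (hf t').2.2.1 x (x + s t • y) (1 - lam) lam
        (by linarith) hlam0 (by ring)
      rw [hcomb] at hconv
      -- realify
      have hfx' : f t' x = (((f t' x).toReal : ℝ) : EReal) :=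
        (EReal.coe_toReal (hftx_top t') (hbot t' x)).symm
      have ht'top : f t' (x + s t • y) ≠ ⊤ := by
        intro hc
        rw [hU] at ht'
        simp only [mem_setOf_eq, hc] at ht'
        exact (not_top_lt ht')
      have hfz' : f t' (x + s t • y) = (((f t' (x + s t • y)).toReal : ℝ) : EReal) :=
        (EReal.coe_toReal ht'top (hbot t' _)).symm
      set a1 : ℝ := (f t' x).toReal
      set a2 : ℝ := (f t' (x + s t • y)).toReal
      have ha1 : a1 ≤ Bv := by
        have := EReal.toReal_le_toReal (hle t' x) (hbot t' x) hx'
        rw [hBv]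
        exact le_max_iff.2 (Or.inl this)
      have ha2 : a2 ≤ Bv := by
        have h1 : a2 ≤ M t := by
          have := ht'
          rw [hU] at this
          simp only [mem_setOf_eq] at this
          have := EReal.toReal_le_toReal this.le (hbot t' _) (by simp)
          simpa using this
        have h2 : M t ≤ Fs.sup' hFne M := Finset.le_sup' M htF
        rw [hBv]
        exact le_max_iff.2 (Or.inr (h1.trans h2))
      calc f t' (x + s₀ • y)
          ≤ ((1 - lam : ℝ) : EReal) * f t' x + ((lam : ℝ) : EReal) * f t' (x + s t • y) := hconv
        _ = (((1 - lam) * a1 + lam * a2 : ℝ) : EReal) := by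
            rw [hfx', hfz']; push_cast; rfl
        _ ≤ ((Bv : ℝ) : EReal) := by
            rw [EReal.coe_le_coe_iff]
            nlinarith
    have hdom : x + s₀ • y ∈ edom (fun z => ⨆ t, f t z) := by
      intro hc
      have : (⨆ t, f t (x + s₀ • y)) ≤ ((Bv : ℝ) : EReal) := iSup_le hbound
      rw [show (fun z => ⨆ t, f t z) (x + s₀ • y) = ⨆ t, f t (x + s₀ • y) from rfl] at hc
      rw [hc] at this
      exact (EReal.coe_lt_top Bv).not_ge this
    have hcon := hpn _ hdom
    have : p (x + s₀ • y) = p x + s₀ * p y := by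
      rw [map_add, map_smul]
      rfl
    rw [this] at hcon
    nlinarith [mul_pos hs₀pos hpy]
  · -- recession cone ⊆ normal cone
    rintro q ⟨c, hcC, hrec⟩
    refine ⟨hx, ?_⟩
    intro z hz
    have hz' : (⨆ t, f t z) ≠ ⊤ := hz
    have hFzb : (⨆ t, f t z) ≠ ⊥ :=
      fun hb => (hbot (Classical.arbitrary T) z)
        (eq_bot_iff.2 (hb ▸ hle (Classical.arbitrary T) z))
    set Fz : ℝ := (⨆ t, f t z).toReal with hFz
    have hFzr : ((Fz : ℝ) : EReal) = ⨆ t, f t z := EReal.coe_toReal hz' hFzb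
    set K : ℝ := Fz - m + ε with hKdef
    set D : Set (WeakDual ℝ X) := {r | r z - r x ≤ K} with hD
    have hDconv : Convex ℝ D := by
      rintro r1 h1 r2 h2 a b ha hb hab
      simp only [hD, mem_setOf_eq] at h1 h2 ⊢
      have e1 : (a • r1 + b • r2 : WeakDual ℝ X) z = a * r1 z + b * r2 z := rfl
      have e2 : (a • r1 + b • r2 : WeakDual ℝ X) x = a * r1 x + b * r2 x := rfl
      rw [e1, e2]
      have hK : a * K + b * K = K := by rw [← add_mul, hab, one_mul]
      nlinarith [mul_le_mul_of_nonneg_left h1 ha, mul_le_mul_of_nonneg_left h2 hb]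
    have hDcl : IsClosed D :=
      isClosed_le (((WeakDual.eval_continuous z).sub (WeakDual.eval_continuous x)))
        continuous_const
    have hSD : S ⊆ D := by
      rintro r hr
      obtain ⟨t, hrt⟩ := mem_iUnion.1 hr
      obtain ⟨-, ht1, ht2, hineq⟩ := hrt
      have h1 := hineq z
      have hfxr : f t x = (((f t x).toReal : ℝ) : EReal) := (EReal.coe_toReal ht1 ht2).symm
      have hmle : m ≤ (f t x).toReal := by
        have := EReal.toReal_le_toReal (hm t) (by simp) ht1
        simpa using this
      have h2 : f t z ≤ ((Fz : ℝ) : EReal) := hFzr ▸ hle t z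
      rw [hfxr, ← EReal.coe_add] at h1
      have h3 : (((f t x).toReal + (r z - r x - ε) : ℝ) : EReal) ≤ ((Fz : ℝ) : EReal) :=
        h1.trans h2
      rw [EReal.coe_le_coe_iff] at h3
      simp only [hD, mem_setOf_eq, hKdef]
      linarith
    have hCD : closure (convexHull ℝ S) ⊆ D :=
      closure_minimal (convexHull_min hSD hDconv) hDcl
    by_contra hpos
    push_neg at hpos
    set d : ℝ := q z - q x with hd
    have hdpos : 0 < d := hpos
    set l : ℝ := (K - (c z - c x) + 1) / d with hl
    have hc0D : c ∈ D := hCD hcC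
    have hczx : c z - c x ≤ K := hc0D
    have hlpos : 0 ≤ l := by
      rw [hl]
      apply div_nonneg _ hdpos.le
      linarith
    have hlD := hCD (hrec l hlpos)
    simp only [hD, mem_setOf_eq] at hlD
    have e1 : (c + l • q : WeakDual ℝ X) z = c z + l * q z := rfl
    have e2 : (c + l • q : WeakDual ℝ X) x = c x + l * q x := rfl
    rw [e1, e2] at hlD
    have hld : l * d = K - (c z - c x) + 1 := by
      rw [hl, div_mul_cancel₀ _ hdpos.ne']
    nlinarith [hld]
end
end
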